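/- arXiv:math/0406616 — 5 statements merged into one kernel-verified Lean document; each statement's English description precedes it below -/
import Mathlib

section
/- Let P(x) = (1/√(2π)) ∫_{u∈ℝ} exp(−u²/2) ∏_{k=1}^m (x − a_k + i·u)^{n_k} du (a convergent integral of a complex-valued function). Then there exists a monic polynomial of degree |n| = n_1 + ⋯ + n_m with real coefficients whose value at every real x equals P(x). -/
open MeasureTheory Finset Polynomial Complex Set

noncomputable section GaussHermiteAux



lemma gauss_ofReal (u : ℝ) :
    Complex.exp (-(u : ℂ) ^ 2 / 2) = ((Real.exp (-u ^ 2 / 2) : ℝ) : ℂ) := by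
  rw [Complex.ofReal_exp]; push_cast; ring_nf

lemma int_abs_pow (j : ℕ) :
    Integrable (fun u : ℝ => |u| ^ j * Real.exp (-(1/2 : ℝ) * u ^ 2)) := by
  have hs : (-1 : ℝ) < (j : ℝ) :=
    neg_one_lt_zero.trans_le (Nat.cast_nonneg j)
  have h0 : IntegrableOn (fun u : ℝ => |u| ^ j * Real.exp (-(1/2 : ℝ) * u ^ 2)) (Ioi 0) := by
    refine (integrableOn_rpow_mul_exp_neg_mul_sq (by norm_num : (0:ℝ) < 1/2) hs).congr_fun
      (fun x hx => ?_) measurableSet_Ioi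
    rw [abs_of_pos hx]; simp only [Real.rpow_natCast]
  rw [← integrableOn_univ, ← Iio_union_Ici (a := (0:ℝ)), integrableOn_union,
    integrableOn_Ici_iff_integrableOn_Ioi]
  refine ⟨?_, h0⟩
  rw [← (Measure.measurePreserving_neg (volume : Measure ℝ)).integrableOn_comp_preimage
      (Homeomorph.neg ℝ).measurableEmbedding]
  simpa [Function.comp_def, abs_neg, neg_sq] using h0

lemma int_pow (j : ℕ) :
    Integrable (fun u : ℝ => Complex.exp (-(u : ℂ) ^ 2 / 2) * (u : ℂ) ^ j) := by
  refine (int_abs_pow j).mono' ?_ ?_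
  · exact ((Complex.continuous_exp.comp (by continuity)).mul (by continuity)).aestronglyMeasurable
  · filter_upwards with u
    rw [gauss_ofReal]
    simp only [norm_mul, Complex.norm_real, Real.norm_eq_abs, norm_pow]
    rw [Real.abs_exp, mul_comm]
    apply le_of_eq; congr 1; ring

lemma intR (R : Polynomial ℂ) :
    Integrable (fun u : ℝ => Complex.exp (-(u : ℂ) ^ 2 / 2) * R.eval (u : ℂ)) := by
  induction R using Polynomial.induction_on' with
  | add p q hp hq =>
    simp only [eval_add, mul_add]; exact hp.add hq
  | monomial n a =>
    have := (int_pow n).const_mul a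
    simpa [eval_monomial, mul_comm, mul_left_comm, mul_assoc] using this





/-- real-coefficient Hermite polynomial -/
def H (n : ℕ) : Polynomial ℝ := (Polynomial.hermite n).map (Int.castRingHom ℝ)

lemma H_zero : H 0 = 1 := by simp [H, hermite_zero]

lemma H_succ (n : ℕ) : H (n + 1) = X * H n - derivative (H n) := by
  simp [H, hermite_succ, Polynomial.derivative_map]

lemma H_one : H 1 = X := by
  rw [H_succ, H_zero]; simp

lemma H_deriv (n : ℕ) : derivative (H (n + 1)) = C ((n : ℝ) + 1) * H n := by
  induction n with
  | zero => rw [H_one, H_zero]; simp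
  | succ n ih =>
    rw [H_succ (n+1), derivative_sub, derivative_mul, derivative_X, ih,
      derivative_C_mul, H_succ n]
    simp only [Nat.cast_add, Nat.cast_one, C_add, C_1]
    ring

lemma H_monic (n : ℕ) : (H n).Monic :=
  (hermite_monic n).map _

lemma H_natDegree (n : ℕ) : (H n).natDegree = n := by
  rw [H, natDegree_map_eq_of_injective Int.cast_injective]
  exact natDegree_hermite

lemma H_coeff_of_lt {d k : ℕ} (h : d < k) : (H d).coeff k = 0 := by
  simp [H, coeff_map, coeff_hermite_of_lt h]

lemma H_coeff_self (d : ℕ) : (H d).coeff d = 1 := by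
  simp [H, coeff_map, coeff_hermite_self]


lemma parts (R : Polynomial ℂ) :
    ∫ u : ℝ, Complex.exp (-(u:ℂ) ^ 2 / 2) * (X * R - derivative R).eval (u:ℂ) = 0 := by
  have hderiv : ∀ u : ℝ, HasDerivAt (fun w : ℝ => Complex.exp (-(w:ℂ) ^ 2 / 2) * R.eval (w:ℂ))
      (Complex.exp (-(u:ℂ) ^ 2 / 2) * (derivative R - X * R).eval (u:ℂ)) u := by
    intro u
    have h1 : HasDerivAt (fun v : ℂ => -v ^ 2 / 2) (-(u:ℂ)) (u:ℂ) := by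
      have := ((hasDerivAt_pow 2 ((u:ℂ))).neg).div_const 2
      simpa using this.congr_deriv (by push_cast; ring)
    have h2 : HasDerivAt (fun v : ℂ => Complex.exp (-v ^ 2 / 2))
        (Complex.exp (-(u:ℂ) ^ 2 / 2) * (-(u:ℂ))) (u:ℂ) := h1.cexp
    have h3 := h2.mul (R.hasDerivAt ((u:ℂ)))
    have h4 := h3.comp_ofReal
    convert h4 using 1
    rfl
    simp only [eval_sub, eval_mul, eval_X]
    ring
  have h0 := integral_eq_zero_of_hasDerivAt_of_integrable hderiv
    (intR (derivative R - X * R))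
    (intR R)
  calc ∫ u : ℝ, Complex.exp (-(u:ℂ) ^ 2 / 2) * (X * R - derivative R).eval (u:ℂ)
      = -∫ u : ℝ, Complex.exp (-(u:ℂ) ^ 2 / 2) * (derivative R - X * R).eval (u:ℂ) := by
        rw [← integral_neg]; congr 1; funext u; simp only [eval_sub, eval_mul, eval_X]; ring
    _ = 0 := by rw [h0, neg_zero]
lemma int_xiu (x : ℝ) (d : ℕ) :
    Integrable (fun u : ℝ =>
      Complex.exp (-(u:ℂ) ^ 2 / 2) * ((x:ℂ) + Complex.I * u) ^ d) := by
  have := intR ((C ((x:ℂ)) + C Complex.I * X) ^ d)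
  simpa using this

lemma gauss_int : ∫ u : ℝ, Complex.exp (-(u:ℂ) ^ 2 / 2)
    = (Real.sqrt (2 * Real.pi) : ℂ) := by
  simp_rw [gauss_ofReal]
  rw [show ∫ u : ℝ, ((Real.exp (-u ^ 2 / 2) : ℝ) : ℂ)
      = ((∫ u : ℝ, Real.exp (-u ^ 2 / 2) : ℝ) : ℂ) from integral_ofReal]
  norm_cast
  have : ∀ u : ℝ, Real.exp (-u ^ 2 / 2) = Real.exp (-(1/2 : ℝ) * u ^ 2) := by
    intro u; congr 1; ring
  simp_rw [this]
  rw [integral_gaussian]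
  congr 1
  rw [div_div_eq_mul_div, div_one, mul_comm]

lemma odd_int : ∫ u : ℝ, Complex.exp (-(u:ℂ) ^ 2 / 2) * (u:ℂ) = 0 := by
  have := parts (C 1)
  simpa using this

lemma key (n : ℕ) (x : ℝ) :
    ∫ u : ℝ, Complex.exp (-(u:ℂ) ^ 2 / 2) * ((x:ℂ) + Complex.I * u) ^ n
      = (Real.sqrt (2 * Real.pi) : ℂ) * (((H n).eval x : ℝ) : ℂ) := by
  induction n using Nat.strong_induction_on with
  | _ n ih =>
    match n with
    | 0 => simpa [H_zero] using gauss_int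
    | 1 =>
      have ig : Integrable (fun u : ℝ => Complex.exp (-(u:ℂ) ^ 2 / 2)) := by
        simpa using intR 1
      have ib : Integrable (fun u : ℝ => Complex.exp (-(u:ℂ) ^ 2 / 2) * (u:ℂ)) := by
        simpa using intR X
      have h1 : (fun u : ℝ => Complex.exp (-(u:ℂ) ^ 2 / 2) * ((x:ℂ) + Complex.I * u) ^ 1)
          = fun u : ℝ => (x:ℂ) * Complex.exp (-(u:ℂ) ^ 2 / 2)
            + Complex.I * (Complex.exp (-(u:ℂ) ^ 2 / 2) * (u:ℂ)) := by
        funext u; ring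
      rw [h1, integral_add (ig.const_mul _) (ib.const_mul _),
        integral_const_mul, integral_const_mul, gauss_int, odd_int, H_one]
      simp [mul_comm]
    | (n + 2) =>
      have h0 := parts (C Complex.I * (C ((x:ℂ)) + C Complex.I * X) ^ (n + 1))
      have hptw : ∀ u : ℝ,
          Complex.exp (-(u:ℂ) ^ 2 / 2) *
            (X * (C Complex.I * (C ((x:ℂ)) + C Complex.I * X) ^ (n + 1))
              - Polynomial.derivative
                  (C Complex.I * (C ((x:ℂ)) + C Complex.I * X) ^ (n + 1))).eval (u:ℂ)
          = Complex.exp (-(u:ℂ) ^ 2 / 2) * ((x:ℂ) + Complex.I * u) ^ (n + 2)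
            - (x:ℂ) * (Complex.exp (-(u:ℂ) ^ 2 / 2) * ((x:ℂ) + Complex.I * u) ^ (n + 1))
            + ((n:ℂ) + 1) * (Complex.exp (-(u:ℂ) ^ 2 / 2) * ((x:ℂ) + Complex.I * u) ^ n) := by
        intro u
        have hA : Polynomial.derivative (C ((x:ℂ)) + C Complex.I * X) = C Complex.I := by
          simp
        rw [derivative_C_mul, derivative_pow_succ, hA]
        simp only [eval_sub, eval_mul, eval_X, eval_C, eval_pow, eval_add, eval_natCast,
          Nat.cast_add, Nat.cast_one]
        have hb : ((x:ℂ) + Complex.I * u) ^ (n + 2)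
            = (((x:ℂ) + Complex.I * u) * ((x:ℂ) + Complex.I * u)) * ((x:ℂ) + Complex.I * u) ^ n := by
          ring
        have hb1 : ((x:ℂ) + Complex.I * u) ^ (n + 1)
            = ((x:ℂ) + Complex.I * u) * ((x:ℂ) + Complex.I * u) ^ n := by ring
        rw [hb, hb1]
        linear_combination (-Complex.exp (-(u:ℂ) ^ 2 / 2) * ((n:ℂ) + 1)
          * ((x:ℂ) + Complex.I * u) ^ n) * Complex.I_sq
      rw [funext hptw] at h0
      have hi2 : Integrable (fun u : ℝ =>
          Complex.exp (-(u:ℂ) ^ 2 / 2) * ((x:ℂ) + Complex.I * u) ^ (n + 2)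
            - (x:ℂ) * (Complex.exp (-(u:ℂ) ^ 2 / 2) * ((x:ℂ) + Complex.I * u) ^ (n + 1))) :=
        (int_xiu x (n+2)).sub ((int_xiu x (n+1)).const_mul _)
      rw [integral_add hi2 ((int_xiu x n).const_mul _),
        integral_sub (int_xiu x (n+2)) ((int_xiu x (n+1)).const_mul _),
        integral_const_mul, integral_const_mul,
        ih (n+1) (by omega), ih n (by omega)] at h0
      have hH : (H (n+2)).eval x = x * (H (n+1)).eval x - ((n:ℝ) + 1) * (H n).eval x := by
        rw [show n + 2 = (n + 1) + 1 from rfl, H_succ (n+1), H_deriv n]; simp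
      rw [hH]
      push_cast
      linear_combination h0
theorem stmt_0 (m : ℕ) (hm : 1 ≤ m) (a : Fin m → ℝ) (ha : Function.Injective a)
    (n : Fin m → ℕ) (hn : ∀ k, 1 ≤ n k) :
    (∀ x : ℝ, Integrable (fun u : ℝ =>
      Complex.exp (-(u : ℂ) ^ 2 / 2) *
        ∏ k, ((x : ℂ) - (a k : ℂ) + Complex.I * (u : ℂ)) ^ (n k))) ∧
    ∃ Q : Polynomial ℝ, Q.Monic ∧ Q.natDegree = ∑ k, n k ∧
      ∀ x : ℝ, ((Q.eval x : ℝ) : ℂ) =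
        (Real.sqrt (2 * Real.pi) : ℂ)⁻¹ *
          ∫ u : ℝ, Complex.exp (-(u : ℂ) ^ 2 / 2) *
            ∏ k, ((x : ℂ) - (a k : ℂ) + Complex.I * (u : ℂ)) ^ (n k) := by
  set N : ℕ := ∑ k, n k with hN
  set S : Polynomial ℝ := ∏ k, (X - C (a k)) ^ (n k) with hSdef
  have hS : S.Monic := monic_prod_of_monic _ _ (fun k _ => (monic_X_sub_C (a k)).pow (n k))
  have hSdeg : S.natDegree = N := by
    rw [hSdef, natDegree_prod _ _ (fun k _ => pow_ne_zero _ (X_sub_C_ne_zero (a k)))]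
    simp [natDegree_pow, natDegree_X_sub_C]
    exact hN.symm
  -- expansion of the product as a sum in powers of (x + I u)
  have hexp : ∀ x : ℝ, ∀ u : ℝ,
      Complex.exp (-(u:ℂ) ^ 2 / 2) * ∏ k, ((x:ℂ) - (a k : ℂ) + Complex.I * (u:ℂ)) ^ (n k)
        = ∑ d ∈ range (N + 1), ((S.coeff d : ℝ) : ℂ)
            * (Complex.exp (-(u:ℂ) ^ 2 / 2) * ((x:ℂ) + Complex.I * u) ^ d) := by
    intro x u
    have h1 : ∏ k, ((x:ℂ) - (a k : ℂ) + Complex.I * (u:ℂ)) ^ (n k)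
        = (S.map (algebraMap ℝ ℂ)).eval ((x:ℂ) + Complex.I * u) := by
      rw [hSdef, Polynomial.map_prod]
      rw [eval_prod]
      refine Finset.prod_congr rfl (fun k _ => ?_)
      simp only [Polynomial.map_pow, Polynomial.map_sub, map_X, map_C]
      rw [eval_pow, eval_sub, eval_X, eval_C]
      rw [show (algebraMap ℝ ℂ) (a k) = ((a k : ℝ) : ℂ) from rfl]
      ring
    have h2 : (S.map (algebraMap ℝ ℂ)).eval ((x:ℂ) + Complex.I * u)
        = ∑ d ∈ range (N + 1), ((S.coeff d : ℝ) : ℂ) * ((x:ℂ) + Complex.I * u) ^ d := by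
      rw [eval_eq_sum_range, hS.natDegree_map, hSdeg]
      refine Finset.sum_congr rfl (fun d _ => ?_)
      rw [coeff_map]
      rfl
    rw [h1, h2, Finset.mul_sum]
    refine Finset.sum_congr rfl (fun d _ => ?_)
    ring
  have hint : ∀ x : ℝ, Integrable (fun u : ℝ =>
      Complex.exp (-(u : ℂ) ^ 2 / 2) *
        ∏ k, ((x : ℂ) - (a k : ℂ) + Complex.I * (u : ℂ)) ^ (n k)) := by
    intro x
    have : ∀ u : ℝ, Complex.exp (-(u : ℂ) ^ 2 / 2) *
        ∏ k, ((x : ℂ) - (a k : ℂ) + Complex.I * (u : ℂ)) ^ (n k)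
        = Complex.exp (-(u : ℂ) ^ 2 / 2) *
          (∏ k, (C ((x:ℂ) - (a k : ℂ)) + C Complex.I * X) ^ (n k)).eval (u:ℂ) := by
      intro u; rw [eval_prod]; simp
    rw [funext this]
    exact intR _
  refine ⟨hint, ⟨∑ d ∈ range (N + 1), C (S.coeff d) * H d, ?_, ?_, ?_⟩⟩
  · -- Monic
    have hle : (∑ d ∈ range (N + 1), C (S.coeff d) * H d).natDegree ≤ N := by
      refine natDegree_sum_le_of_forall_le _ _ (fun d hd => ?_)
      refine (natDegree_C_mul_le _ _).trans ?_
      rw [H_natDegree]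
      exact Nat.lt_succ_iff.mp (mem_range.mp hd)
    have hco : (∑ d ∈ range (N + 1), C (S.coeff d) * H d).coeff N = 1 := by
      rw [finset_sum_coeff]
      rw [Finset.sum_eq_single N]
      · rw [coeff_C_mul, H_coeff_self, ← hSdeg]
        simpa using hS.coeff_natDegree
      · intro d hd hdne
        have : d < N := lt_of_le_of_ne (Nat.lt_succ_iff.mp (mem_range.mp hd)) hdne
        rw [coeff_C_mul, H_coeff_of_lt this, mul_zero]
      · intro h; exact absurd (self_mem_range_succ N) h
    exact monic_of_natDegree_le_of_coeff_eq_one N hle hco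
  · -- natDegree
    have hle : (∑ d ∈ range (N + 1), C (S.coeff d) * H d).natDegree ≤ N := by
      refine natDegree_sum_le_of_forall_le _ _ (fun d hd => ?_)
      refine (natDegree_C_mul_le _ _).trans ?_
      rw [H_natDegree]
      exact Nat.lt_succ_iff.mp (mem_range.mp hd)
    have hco : (∑ d ∈ range (N + 1), C (S.coeff d) * H d).coeff N = 1 := by
      rw [finset_sum_coeff]
      rw [Finset.sum_eq_single N]
      · rw [coeff_C_mul, H_coeff_self, ← hSdeg]
        simpa using hS.coeff_natDegree
      · intro d hd hdne
        have : d < N := lt_of_le_of_ne (Nat.lt_succ_iff.mp (mem_range.mp hd)) hdne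
        rw [coeff_C_mul, H_coeff_of_lt this, mul_zero]
      · intro h; exact absurd (self_mem_range_succ N) h
    exact le_antisymm hle (le_natDegree_of_ne_zero (by rw [hco]; exact one_ne_zero))
  · -- evaluation
    intro x
    have hval : ∫ u : ℝ, Complex.exp (-(u : ℂ) ^ 2 / 2) *
        ∏ k, ((x : ℂ) - (a k : ℂ) + Complex.I * (u : ℂ)) ^ (n k)
        = (Real.sqrt (2 * Real.pi) : ℂ) *
          (((∑ d ∈ range (N + 1), C (S.coeff d) * H d).eval x : ℝ) : ℂ) := by
      rw [funext (hexp x)]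
      rw [integral_finset_sum _ (fun d _ => ((int_xiu x d).const_mul _))]
      have : ∀ d ∈ range (N + 1), ((S.coeff d : ℝ) : ℂ) *
          ∫ u : ℝ, Complex.exp (-(u:ℂ) ^ 2 / 2) * ((x:ℂ) + Complex.I * u) ^ d
          = (Real.sqrt (2 * Real.pi) : ℂ) * (((S.coeff d * (H d).eval x : ℝ)) : ℂ) := by
        intro d _
        rw [key d x]
        push_cast
        ring
      simp_rw [integral_const_mul]
      rw [Finset.sum_congr rfl this, ← Finset.mul_sum]
      congr 1
      rw [eval_finset_sum]
      simp only [eval_mul, eval_C]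
      push_cast
      rfl
    rw [hval, ← mul_assoc, inv_mul_cancel₀, one_mul]
    exact Complex.ofReal_ne_zero.mpr
      (Real.sqrt_ne_zero'.mpr (by positivity))

end GaussHermiteAux
end

section
/- For every k ∈ {1, …, m} and every integer j with 0 ≤ j ≤ n_k − 1, one has ∫_{x∈ℝ} P_{(n_1,…,n_m)}(x) · x^j · exp(−x²/2 + a_k x) dx = 0. -/
open MeasureTheory Finset

/-- The multiple Hermite function of type II (integral representation). -/
noncomputable def mhP {m : ℕ} (a : Fin m → ℝ) (ν : Fin m → ℕ) (x : ℝ) : ℂ :=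
  (Real.sqrt (2 * Real.pi) : ℂ)⁻¹ *
    ∫ u : ℝ, Complex.exp (-(u : ℂ) ^ 2 / 2) *
      ∏ k, ((x : ℂ) - (a k : ℂ) + Complex.I * (u : ℂ)) ^ (ν k)

/-! ### Auxiliary lemmas -/

lemma mh_gauss_moment_C (p q : ℕ) (h : q < p) :
    (∫ z : ℂ, Complex.exp (-(((z.re:ℂ))^2 + ((z.im:ℂ))^2)/2) * (z ^ p * (starRingEnd ℂ) z ^ q)) = 0 := by
  set g : ℂ → ℂ := fun z => Complex.exp (-(((z.re:ℂ))^2 + ((z.im:ℂ))^2)/2) * (z ^ p * (starRingEnd ℂ) z ^ q) with hg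
  have hd : ((p:ℝ) - q) ≠ 0 := sub_ne_zero.mpr (by exact_mod_cast h.ne')
  set t : ℝ := Real.pi / ((p:ℝ) - q) with ht
  set c : Circle := Circle.exp t with hc
  have hmp : MeasurePreserving (rotation c) volume volume :=
    (rotation c).measurePreserving
  have hcomp : ∫ z, g (rotation c z) = ∫ z, g z :=
    hmp.integral_comp (rotation c).toHomeomorph.measurableEmbedding g
  have habs : ∀ z : ℂ, (((c:ℂ)*z).re:ℂ)^2 + (((c:ℂ)*z).im:ℂ)^2 = ((z.re:ℂ))^2 + ((z.im:ℂ))^2 := by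
    intro z
    have h1 : Complex.normSq ((c:ℂ)*z) = Complex.normSq z := by
      rw [Complex.normSq_mul]
      simp [Complex.normSq_eq_norm_sq, Circle.norm_coe]
    have h2 : ((c:ℂ)*z).re^2 + ((c:ℂ)*z).im^2 = z.re^2 + z.im^2 := by
      simpa [Complex.normSq_apply, pow_two] using h1
    exact_mod_cast h2
  have hk : ∀ z : ℂ, g (rotation c z) = ((c:ℂ)^p * ((starRingEnd ℂ) (c:ℂ))^q) * g z := by
    intro z
    rw [rotation_apply, hg]
    simp only [map_mul, mul_pow, habs]
    ring
  have hkval : ((c:ℂ)^p * ((starRingEnd ℂ) (c:ℂ))^q) = -1 := by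
    rw [hc, Circle.coe_exp, ← Complex.exp_conj]
    simp only [map_mul, Complex.conj_ofReal, Complex.conj_I, ← Complex.exp_nat_mul]
    rw [← Complex.exp_add, ← Complex.exp_pi_mul_I]
    congr 1
    have hr : ((p:ℝ) - q) * t = Real.pi := by
      rw [ht]; field_simp
    have hrc : ((p:ℂ) - q) * (t:ℂ) = (Real.pi:ℂ) := by exact_mod_cast hr
    linear_combination Complex.I * hrc
  have hneg : ∫ z, g z = -(∫ z, g z) := by
    conv_lhs => rw [← hcomp]
    simp_rw [hk, hkval]
    rw [integral_const_mul]
    ring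
  have h2 : (2:ℂ) • ∫ z, g z = 0 := by
    rw [two_smul]
    linear_combination hneg
  simpa using h2

lemma mh_conj_eq (z : ℂ) : (z.re:ℂ) - Complex.I * z.im = (starRingEnd ℂ) z := by
  apply Complex.ext <;> simp

lemma mh_gauss_moment (p q : ℕ) (h : q < p) :
    (∫ v : ℝ × ℝ, Complex.exp (-(((v.1:ℂ))^2 + ((v.2:ℂ))^2)/2) *
      (((v.1:ℂ) + Complex.I * v.2) ^ p * ((v.1:ℂ) - Complex.I * v.2) ^ q)) = 0 := by
  rw [← Complex.volume_preserving_equiv_real_prod.integral_comp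
      Complex.measurableEquivRealProd.measurableEmbedding]
  rw [← mh_gauss_moment_C p q h]
  congr 1
  funext z
  show Complex.exp (-(((z.re:ℂ))^2 + ((z.im:ℂ))^2)/2) *
      (((z.re:ℂ) + Complex.I * z.im) ^ p * ((z.re:ℂ) - Complex.I * z.im) ^ q) = _
  rw [mh_conj_eq]
  congr 2
  rw [mul_comm Complex.I _, Complex.re_add_im]

lemma mh_integrable_abs_pow_gauss (k : ℕ) :
    Integrable (fun x : ℝ => |x| ^ k * Real.exp (-(1/2) * x ^ 2)) := by
  have hb : (0:ℝ) < 1/2 := by norm_num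
  have hs : (-1:ℝ) < (k:ℝ) := lt_of_lt_of_le neg_one_lt_zero (Nat.cast_nonneg k)
  have h1 : IntegrableOn (fun x : ℝ => |x| ^ k * Real.exp (-(1/2) * x ^ 2)) (Set.Ioi 0) := by
    apply (integrableOn_rpow_mul_exp_neg_mul_sq hb hs).congr_fun ?_ measurableSet_Ioi
    intro x hx
    simp only [abs_of_pos (show (0:ℝ) < x from hx), Real.rpow_natCast]
  have h2 : IntegrableOn (fun x : ℝ => |x| ^ k * Real.exp (-(1/2) * x ^ 2)) (Set.Iio 0) := by
    rw [← (Measure.measurePreserving_neg (volume : Measure ℝ)).integrableOn_comp_preimage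
      (Homeomorph.neg ℝ).measurableEmbedding]
    have hpre : (Neg.neg ⁻¹' Set.Iio (0:ℝ)) = Set.Ioi 0 := by
      ext y; simp
    rw [hpre]
    simp only [Function.comp_def, abs_neg, neg_sq]
    exact h1
  rw [← integrableOn_univ, ← Set.Iio_union_Ici (a := (0:ℝ)), integrableOn_union]
  refine ⟨h2, ?_⟩
  rw [integrableOn_Ici_iff_integrableOn_Ioi]
  exact h1

lemma mh_integrable_one_add_abs_pow_gauss (N : ℕ) :
    Integrable (fun x : ℝ => (1+|x|) ^ N * Real.exp (-(1/2) * x ^ 2)) := by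
  have h : ∀ x : ℝ, (1+|x|) ^ N * Real.exp (-(1/2) * x ^ 2)
      = ∑ i ∈ range (N+1), (N.choose i : ℝ) * (|x| ^ i * Real.exp (-(1/2) * x ^ 2)) := by
    intro x
    rw [add_comm (1:ℝ) |x|, add_pow, Finset.sum_mul]
    refine Finset.sum_congr rfl fun i _ => by ring
  simp_rw [h]
  exact integrable_finset_sum _ fun i _ => (mh_integrable_abs_pow_gauss i).const_mul _

/-- master integrability lemma -/
lemma mh_integrable_gauss_mul (f : ℝ × ℝ → ℂ) (hf : Continuous f) (N : ℕ) (C : ℝ)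
    (hb : ∀ x u : ℝ, ‖f (x, u)‖ ≤ C * ((1+|x|)^N * (1+|u|)^N)) :
    Integrable (fun v : ℝ × ℝ => Complex.exp (-(((v.1:ℂ))^2 + ((v.2:ℂ))^2)/2) * f v) := by
  have hg : Integrable (fun v : ℝ × ℝ =>
      (C * ((1+|v.1|)^N * Real.exp (-(1/2) * v.1 ^ 2))) * ((1+|v.2|)^N * Real.exp (-(1/2) * v.2 ^ 2))) :=
    ((mh_integrable_one_add_abs_pow_gauss N).const_mul C).mul_prod (mh_integrable_one_add_abs_pow_gauss N)
  apply Integrable.mono' hg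
  · apply Continuous.aestronglyMeasurable
    apply Continuous.mul ?_ hf
    apply Complex.continuous_exp.comp
    fun_prop
  · refine Filter.Eventually.of_forall fun v => ?_
    rw [norm_mul]
    have h1 : ‖Complex.exp (-(((v.1:ℂ))^2 + ((v.2:ℂ))^2)/2)‖
        = Real.exp (-(1/2) * v.1 ^ 2) * Real.exp (-(1/2) * v.2 ^ 2) := by
      rw [← Real.exp_add, Complex.norm_exp]
      congr 1
      have h2 : (-(((v.1:ℂ))^2 + ((v.2:ℂ))^2)/2) = ((-(1/2) * v.1 ^ 2 + -(1/2) * v.2 ^ 2 : ℝ) : ℂ) := by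
        push_cast; ring
      rw [h2, Complex.ofReal_re]
    rw [h1]
    calc Real.exp (-(1/2) * v.1 ^ 2) * Real.exp (-(1/2) * v.2 ^ 2) * ‖f (v.1, v.2)‖
        ≤ Real.exp (-(1/2) * v.1 ^ 2) * Real.exp (-(1/2) * v.2 ^ 2) * (C * ((1+|v.1|)^N * (1+|v.2|)^N)) := by
          apply mul_le_mul_of_nonneg_left (hb v.1 v.2) (by positivity)
      _ = C * ((1+|v.1|)^N * Real.exp (-(1/2) * v.1 ^ 2)) * ((1+|v.2|)^N * Real.exp (-(1/2) * v.2 ^ 2)) := by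
          ring

lemma mh_z_bound (x u : ℝ) : ‖(x:ℂ) + Complex.I*u‖ ≤ (1+|x|)*(1+|u|) := by
  refine (norm_add_le _ _).trans ?_
  rw [Complex.norm_real, norm_mul, Complex.norm_I, one_mul, Complex.norm_real,
    Real.norm_eq_abs, Real.norm_eq_abs]
  nlinarith [abs_nonneg x, abs_nonneg u]

lemma mh_w_bound (x u : ℝ) : ‖(x:ℂ) - Complex.I*u‖ ≤ (1+|x|)*(1+|u|) := by
  refine (norm_sub_le _ _).trans ?_
  rw [Complex.norm_real, norm_mul, Complex.norm_I, one_mul, Complex.norm_real,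
    Real.norm_eq_abs, Real.norm_eq_abs]
  nlinarith [abs_nonneg x, abs_nonneg u]

lemma mh_zw_bound (a b : ℕ) (x u : ℝ) :
    ‖((x:ℂ) + Complex.I*u)^a * ((x:ℂ) - Complex.I*u)^b‖
      ≤ (1+|x|)^(a+b) * (1+|u|)^(a+b) := by
  rw [norm_mul, norm_pow, norm_pow]
  calc ‖(x:ℂ) + Complex.I*u‖^a * ‖(x:ℂ) - Complex.I*u‖^b
      ≤ ((1+|x|)*(1+|u|))^a * ((1+|x|)*(1+|u|))^b :=
        mul_le_mul (pow_le_pow_left₀ (norm_nonneg _) (mh_z_bound x u) a)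
          (pow_le_pow_left₀ (norm_nonneg _) (mh_w_bound x u) b) (by positivity) (by positivity)
    _ = (1+|x|)^(a+b) * (1+|u|)^(a+b) := by rw [← pow_add, mul_pow]

lemma mh_poly_w_bound (P : Polynomial ℂ) (q : ℕ) : ∃ C : ℝ, ∀ x u : ℝ,
    ‖P.eval ((x:ℂ) + Complex.I*(u:ℂ)) * ((x:ℂ) - Complex.I*(u:ℂ))^q‖
      ≤ C * ((1+|x|)^(P.natDegree+q) * (1+|u|)^(P.natDegree+q)) := by
  refine ⟨∑ i ∈ range (P.natDegree+1), ‖P.coeff i‖, fun x u => ?_⟩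
  rw [Polynomial.eval_eq_sum_range, Finset.sum_mul]
  have hle : ∀ i ∈ range (P.natDegree+1),
      ‖P.coeff i * ((x:ℂ) + Complex.I*(u:ℂ))^i * ((x:ℂ) - Complex.I*(u:ℂ))^q‖
        ≤ ‖P.coeff i‖ * ((1+|x|)^(P.natDegree+q) * (1+|u|)^(P.natDegree+q)) := by
    intro i hi
    rw [mul_assoc, norm_mul]
    refine mul_le_mul_of_nonneg_left ((mh_zw_bound i q x u).trans ?_) (norm_nonneg _)
    have hi' : i + q ≤ P.natDegree + q := by
      have := Nat.lt_succ_iff.mp (mem_range.mp hi); omega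
    have hx1 : (1:ℝ) ≤ 1+|x| := le_add_of_nonneg_right (abs_nonneg x)
    have hu1 : (1:ℝ) ≤ 1+|u| := le_add_of_nonneg_right (abs_nonneg u)
    exact mul_le_mul (pow_le_pow_right₀ hx1 hi') (pow_le_pow_right₀ hu1 hi')
      (by positivity) (by positivity)
  refine (norm_sum_le _ _).trans ((Finset.sum_le_sum hle).trans ?_)
  rw [← Finset.sum_mul]

/-- integral of gauss times a z-polynomial divisible by X^nn times conj-power q < nn vanishes -/
lemma mh_lemD (P : Polynomial ℂ) (nn q : ℕ) (hq : q < nn) (hdvd : Polynomial.X^nn ∣ P) :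
    ∫ v : ℝ×ℝ, Complex.exp (-(((v.1:ℂ))^2 + ((v.2:ℂ))^2)/2) *
      (P.eval ((v.1:ℂ) + Complex.I*v.2) * ((v.1:ℂ) - Complex.I*v.2)^q) = 0 := by
  obtain ⟨R, rfl⟩ := hdvd
  have key : ∀ v : ℝ×ℝ, Complex.exp (-(((v.1:ℂ))^2 + ((v.2:ℂ))^2)/2) *
      ((Polynomial.X^nn * R).eval ((v.1:ℂ) + Complex.I*v.2) * ((v.1:ℂ) - Complex.I*v.2)^q)
      = ∑ i ∈ range (R.natDegree+1), R.coeff i *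
          (Complex.exp (-(((v.1:ℂ))^2 + ((v.2:ℂ))^2)/2) *
            (((v.1:ℂ) + Complex.I*v.2)^(nn+i) * ((v.1:ℂ) - Complex.I*v.2)^q)) := by
    intro v
    rw [Polynomial.eval_mul, Polynomial.eval_pow, Polynomial.eval_X,
      Polynomial.eval_eq_sum_range, Finset.mul_sum, Finset.sum_mul, Finset.mul_sum]
    refine Finset.sum_congr rfl fun i _ => ?_
    rw [pow_add]
    ring
  simp_rw [key]
  rw [integral_finset_sum]
  · refine Finset.sum_eq_zero fun i _ => ?_
    rw [integral_const_mul, mh_gauss_moment (nn+i) q (lt_of_lt_of_le hq (Nat.le_add_right _ _)), mul_zero]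
  · intro i _
    apply Integrable.const_mul
    apply mh_integrable_gauss_mul _ ?_ (nn+i+q) 1 ?_
    · fun_prop
    · intro x u
      rw [one_mul]
      exact mh_zw_bound (nn+i) q x u

lemma mh_key_pointwise (m : ℕ) (a : Fin m → ℝ) (n : Fin m → ℕ) (A : ℝ) (j : ℕ) (x u : ℝ) :
    (Complex.exp (-(u:ℂ)^2/2) * ∏ l, ((x:ℂ) + (A:ℂ) - (a l:ℂ) + Complex.I*(u:ℂ))^(n l)) *
      (((x:ℂ) + (A:ℂ))^j * Complex.exp (-((x:ℂ) + (A:ℂ))^2/2 + (A:ℂ)*((x:ℂ) + (A:ℂ))))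
    = ∑ q ∈ range (j+1), ((j.choose q : ℂ) * (2:ℂ)⁻¹^q * Complex.exp ((A:ℂ)^2/2)) *
        (Complex.exp (-(((x:ℂ))^2 + ((u:ℂ))^2)/2) *
          ((((∏ l, (Polynomial.X + Polynomial.C ((A:ℂ) - (a l:ℂ)))^(n l)) *
            (Polynomial.C ((2:ℂ)⁻¹) * Polynomial.X + Polynomial.C (A:ℂ))^(j-q)).eval
              ((x:ℂ) + Complex.I*(u:ℂ))) *
            ((x:ℂ) - Complex.I*(u:ℂ))^q)) := by
  set zz : ℂ := (x:ℂ) + Complex.I*(u:ℂ) with hzz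
  set ww : ℂ := (x:ℂ) - Complex.I*(u:ℂ) with hww
  have hexp : Complex.exp (-(u:ℂ)^2/2) * Complex.exp (-((x:ℂ)+(A:ℂ))^2/2 + (A:ℂ)*((x:ℂ)+(A:ℂ)))
      = Complex.exp (-(((x:ℂ))^2+((u:ℂ))^2)/2) * Complex.exp ((A:ℂ)^2/2) := by
    rw [← Complex.exp_add, ← Complex.exp_add]; congr 1; ring
  have hprod : ∀ l, ((x:ℂ) + (A:ℂ) - (a l:ℂ) + Complex.I*(u:ℂ))^(n l)
      = (zz + ((A:ℂ) - (a l:ℂ)))^(n l) := by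
    intro l; congr 1; rw [hzz]; ring
  have hbin : ((x:ℂ)+(A:ℂ))^j
      = ∑ q ∈ range (j+1), (ww/2)^q * (zz/2 + (A:ℂ))^(j-q) * (j.choose q : ℂ) := by
    rw [show ((x:ℂ)+(A:ℂ)) = ww/2 + (zz/2 + (A:ℂ)) by rw [hzz, hww]; ring, add_pow]
  calc (Complex.exp (-(u:ℂ)^2/2) * ∏ l, ((x:ℂ) + (A:ℂ) - (a l:ℂ) + Complex.I*(u:ℂ))^(n l)) *
      (((x:ℂ) + (A:ℂ))^j * Complex.exp (-((x:ℂ) + (A:ℂ))^2/2 + (A:ℂ)*((x:ℂ) + (A:ℂ))))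
      = (Complex.exp (-(u:ℂ)^2/2) * Complex.exp (-((x:ℂ)+(A:ℂ))^2/2 + (A:ℂ)*((x:ℂ)+(A:ℂ)))) *
        ((∏ l, ((x:ℂ) + (A:ℂ) - (a l:ℂ) + Complex.I*(u:ℂ))^(n l)) * ((x:ℂ)+(A:ℂ))^j) := by ring
    _ = (Complex.exp (-(((x:ℂ))^2+((u:ℂ))^2)/2) * Complex.exp ((A:ℂ)^2/2)) *
        ((∏ l, (zz + ((A:ℂ) - (a l:ℂ)))^(n l)) *
          ∑ q ∈ range (j+1), (ww/2)^q * (zz/2 + (A:ℂ))^(j-q) * (j.choose q : ℂ)) := by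
      rw [hexp, hbin]; simp only [hprod]
    _ = _ := by
      simp only [Finset.mul_sum]
      refine Finset.sum_congr rfl fun q hq => ?_
      simp only [Polynomial.eval_mul, Polynomial.eval_prod, Polynomial.eval_pow,
        Polynomial.eval_add, Polynomial.eval_X, Polynomial.eval_C]
      have h2 : (ww/2)^q = (2:ℂ)⁻¹^q * ww^q := by
        rw [div_eq_mul_inv, mul_pow, mul_comm]
      rw [h2]
      ring

/-- the polynomial appearing in the expansion -/
noncomputable def mhPP {m : ℕ} (a : Fin m → ℝ) (n : Fin m → ℕ) (A : ℝ) (j q : ℕ) : Polynomial ℂ :=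
  (∏ l, (Polynomial.X + Polynomial.C ((A:ℂ) - (a l:ℂ)))^(n l)) *
    (Polynomial.C ((2:ℂ)⁻¹) * Polynomial.X + Polynomial.C (A:ℂ))^(j-q)

lemma mh_TT_integrable {m : ℕ} (a : Fin m → ℝ) (n : Fin m → ℕ) (A : ℝ) (j q : ℕ) :
    Integrable (fun v : ℝ×ℝ => Complex.exp (-(((v.1:ℂ))^2 + ((v.2:ℂ))^2)/2) *
      ((mhPP a n A j q).eval ((v.1:ℂ) + Complex.I*(v.2:ℂ)) * ((v.1:ℂ) - Complex.I*(v.2:ℂ))^q)) := by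
  obtain ⟨C, hC⟩ := mh_poly_w_bound (mhPP a n A j q) q
  have hcont1 : Continuous fun w : ℂ => (mhPP a n A j q).eval w := (mhPP a n A j q).continuous
  have hcont2 : Continuous fun v : ℝ×ℝ => ((v.1:ℂ) + Complex.I*(v.2:ℂ)) := by fun_prop
  have hcont3 : Continuous fun v : ℝ×ℝ => ((v.1:ℂ) - Complex.I*(v.2:ℂ))^q := by fun_prop
  exact mh_integrable_gauss_mul _ ((hcont1.comp hcont2).mul hcont3)
    ((mhPP a n A j q).natDegree + q) C hC

lemma mh_main_aux (m : ℕ) (a : Fin m → ℝ) (n : Fin m → ℕ) (k : Fin m) (j : ℕ) (hj : j < n k)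
    (A : ℝ) (hAk : A = a k) :
    ∫ x : ℝ, (∫ u : ℝ, Complex.exp (-(u:ℂ)^2/2) *
        ∏ l, ((x:ℂ) - (a l:ℂ) + Complex.I*(u:ℂ))^(n l)) *
      ((x:ℂ)^j * Complex.exp (-(x:ℂ)^2/2 + (A:ℂ)*(x:ℂ))) = 0 := by
  rw [← integral_add_right_eq_self (fun x : ℝ => (∫ u : ℝ, Complex.exp (-(u:ℂ)^2/2) *
        ∏ l, ((x:ℂ) - (a l:ℂ) + Complex.I*(u:ℂ))^(n l)) *
      ((x:ℂ)^j * Complex.exp (-(x:ℂ)^2/2 + (A:ℂ)*(x:ℂ)))) A]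
  have hFeq : ∀ x : ℝ,
      (∫ u : ℝ, Complex.exp (-(u:ℂ)^2/2) *
        ∏ l, (((x+A:ℝ):ℂ) - (a l:ℂ) + Complex.I*(u:ℂ))^(n l)) *
      (((x+A:ℝ):ℂ)^j * Complex.exp (-((x+A:ℝ):ℂ)^2/2 + (A:ℂ)*((x+A:ℝ):ℂ)))
      = ∫ u : ℝ, ∑ q ∈ range (j+1), ((j.choose q : ℂ) * (2:ℂ)⁻¹^q * Complex.exp ((A:ℂ)^2/2)) *
          (Complex.exp (-(((x:ℂ))^2 + ((u:ℂ))^2)/2) *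
            ((mhPP a n A j q).eval ((x:ℂ) + Complex.I*(u:ℂ)) * ((x:ℂ) - Complex.I*(u:ℂ))^q)) := by
    intro x
    rw [← integral_mul_const]
    congr 1
    funext u
    push_cast
    simpa only [mhPP] using mh_key_pointwise m a n A j x u
  simp_rw [hFeq]
  have hInt : Integrable (Function.uncurry fun (x u : ℝ) =>
      ∑ q ∈ range (j+1), ((j.choose q : ℂ) * (2:ℂ)⁻¹^q * Complex.exp ((A:ℂ)^2/2)) *
          (Complex.exp (-(((x:ℂ))^2 + ((u:ℂ))^2)/2) *
            ((mhPP a n A j q).eval ((x:ℂ) + Complex.I*(u:ℂ)) * ((x:ℂ) - Complex.I*(u:ℂ))^q)))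
      ((volume : Measure ℝ).prod volume) := by
    exact integrable_finset_sum _ fun q _ => (mh_TT_integrable a n A j q).const_mul _
  rw [MeasureTheory.integral_integral hInt]
  have hsum := MeasureTheory.integral_finset_sum (μ := (volume : Measure ℝ).prod volume) (range (j+1))
      (f := fun q (z : ℝ×ℝ) => ((j.choose q : ℂ) * (2:ℂ)⁻¹^q * Complex.exp ((A:ℂ)^2/2)) *
          (Complex.exp (-(((z.1:ℂ))^2 + ((z.2:ℂ))^2)/2) *
            ((mhPP a n A j q).eval ((z.1:ℂ) + Complex.I*(z.2:ℂ)) * ((z.1:ℂ) - Complex.I*(z.2:ℂ))^q)))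
      (fun q _ => (mh_TT_integrable a n A j q).const_mul _)
  rw [hsum]
  refine Finset.sum_eq_zero fun q hq => ?_
  rw [integral_const_mul, ← MeasureTheory.Measure.volume_eq_prod]
  have hqlt : q < n k := lt_of_le_of_lt (Nat.lt_succ_iff.mp (mem_range.mp hq)) hj
  have hdvd : Polynomial.X^(n k) ∣ mhPP a n A j q := by
    have h1 : (Polynomial.X + Polynomial.C ((A:ℂ) - ((a k:ℝ):ℂ)))^(n k) ∣
        ∏ l, (Polynomial.X + Polynomial.C ((A:ℂ) - ((a l:ℝ):ℂ)))^(n l) :=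
      Finset.dvd_prod_of_mem _ (mem_univ k)
    have h2 : ((A:ℝ):ℂ) - ((a k:ℝ):ℂ) = 0 := by rw [hAk]; ring
    rw [h2, Polynomial.C_0, add_zero] at h1
    exact h1.mul_right _
  rw [mh_lemD (mhPP a n A j q) (n k) q hqlt hdvd, mul_zero]

theorem stmt_1 (m : ℕ) (hm : 1 ≤ m) (a : Fin m → ℝ) (ha : Function.Injective a)
    (n : Fin m → ℕ) (hn : ∀ k, 1 ≤ n k) :
    ∀ k : Fin m, ∀ j : ℕ, j < n k →
      ∫ x : ℝ, mhP a n x * (x : ℂ) ^ j *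
        Complex.exp (-(x : ℂ) ^ 2 / 2 + (a k : ℂ) * (x : ℂ)) = 0 := by
  intro k j hj
  simp only [mhP, mul_assoc]
  rw [integral_const_mul, mul_eq_zero]
  right
  exact mh_main_aux m a n k j hj (a k) rfl
end

section
/- For every k ∈ {1, …, m}, one has ∫_{x∈ℝ} P_{(n_1,…,n_m)}(x) · x^{n_k} · exp(−x²/2 + a_k x) dx = √(2π) · (n_k)! · exp(a_k²/2) · ∏_{l≠k} (a_k − a_l)^{n_l}. -/
open MeasureTheory Finset

section AuxMHP
open Polynomial

lemma gauss_integrable (r : ℕ) :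
    Integrable (fun u : ℝ => u ^ r * Real.exp (-u ^ 2 / 2)) := by
  have h := integrable_rpow_mul_exp_neg_mul_sq (b := (1:ℝ)/2) (by norm_num)
    (s := (r : ℝ)) (lt_of_lt_of_le neg_one_lt_zero (Nat.cast_nonneg r))
  convert h using 2 with u
  rw [Real.rpow_natCast]
  ring_nf

lemma gauss_moment_rec (r : ℕ) :
    ∫ u : ℝ, u ^ (r + 2) * Real.exp (-u ^ 2 / 2) =
      (r + 1 : ℝ) * ∫ u : ℝ, u ^ r * Real.exp (-u ^ 2 / 2) := by
  have hderiv : ∀ u : ℝ, HasDerivAt (fun u : ℝ => u ^ (r + 1) * Real.exp (-u ^ 2 / 2))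
      ((r + 1 : ℝ) * u ^ r * Real.exp (-u ^ 2 / 2) - u ^ (r + 2) * Real.exp (-u ^ 2 / 2)) u := by
    intro u
    have h1 : HasDerivAt (fun u : ℝ => u ^ (r + 1)) ((r + 1 : ℝ) * u ^ r) u := by
      simpa using hasDerivAt_pow (r + 1) u
    have h2 : HasDerivAt (fun u : ℝ => Real.exp (-u ^ 2 / 2)) (-u * Real.exp (-u ^ 2 / 2)) u := by
      have h3 : HasDerivAt (fun u : ℝ => -u ^ 2 / 2) (-u) u := by
        have := (hasDerivAt_pow 2 u).neg.div_const 2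
        refine this.congr_deriv ?_
        push_cast; ring
      simpa [mul_comm] using h3.exp
    have := h1.mul h2
    refine this.congr_deriv ?_
    ring
  have hint : Integrable (fun u : ℝ =>
      (r + 1 : ℝ) * u ^ r * Real.exp (-u ^ 2 / 2) - u ^ (r + 2) * Real.exp (-u ^ 2 / 2)) := by
    exact (((gauss_integrable r).const_mul ((r:ℝ)+1)).congr (Filter.Eventually.of_forall fun u => by ring)).sub
      (gauss_integrable (r + 2))
  have h0 := integral_eq_zero_of_hasDerivAt_of_integrable hderiv hint
    (by simpa using gauss_integrable (r + 1))
  rw [integral_sub (((gauss_integrable r).const_mul ((r:ℝ)+1)).congr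
      (Filter.Eventually.of_forall fun u => by ring)) (gauss_integrable (r + 2))] at h0
  have key := sub_eq_zero.mp h0
  rw [← key]
  simp_rw [mul_assoc]
  exact integral_const_mul _ _

lemma gauss_moment_zero : ∫ u : ℝ, Real.exp (-u ^ 2 / 2) = Real.sqrt (2 * Real.pi) := by
  have := integral_gaussian ((1:ℝ)/2)
  rw [show Real.pi / ((1:ℝ)/2) = 2 * Real.pi by ring] at this
  rw [← this]
  congr 1 with u
  ring_nf

lemma gauss_moment_one : ∫ u : ℝ, u ^ 1 * Real.exp (-u ^ 2 / 2) = 0 := by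
  have hderiv : ∀ u : ℝ, HasDerivAt (fun u : ℝ => -Real.exp (-u ^ 2 / 2))
      (u ^ 1 * Real.exp (-u ^ 2 / 2)) u := by
    intro u
    have h3 : HasDerivAt (fun u : ℝ => -u ^ 2 / 2) (-u) u := by
      have := (hasDerivAt_pow 2 u).neg.div_const 2
      refine this.congr_deriv ?_
      push_cast; ring
    have := h3.exp.neg
    refine this.congr_deriv ?_
    ring
  exact integral_eq_zero_of_hasDerivAt_of_integrable hderiv (gauss_integrable 1)
    ((integrable_exp_neg_mul_sq (by norm_num : (0:ℝ) < 1/2)).congr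
      (Filter.Eventually.of_forall fun u => by ring_nf)).neg

lemma gauss_moment_even (j : ℕ) :
    ∫ u : ℝ, u ^ (2 * j) * Real.exp (-u ^ 2 / 2) =
      Real.sqrt (2 * Real.pi) * (2 * j).factorial / (2 ^ j * j.factorial) := by
  induction j with
  | zero => simpa using gauss_moment_zero
  | succ j ih =>
      have h := gauss_moment_rec (2 * j)
      rw [show 2 * (j + 1) = 2 * j + 2 by ring, h, ih]
      have h1 : (j.factorial : ℝ) ≠ 0 := Nat.cast_ne_zero.mpr j.factorial_ne_zero
      have h2 : (2:ℝ) ^ j ≠ 0 := by positivity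
      rw [show (2 * j + 2) = (2 * j + 1) + 1 by ring]
      rw [Nat.factorial_succ, Nat.factorial_succ, Nat.factorial_succ]
      push_cast
      field_simp
      ring

lemma gauss_moment_odd (j : ℕ) :
    ∫ u : ℝ, u ^ (2 * j + 1) * Real.exp (-u ^ 2 / 2) = 0 := by
  induction j with
  | zero => simpa using gauss_moment_one
  | succ j ih =>
      have h := gauss_moment_rec (2 * j + 1)
      rw [show 2 * (j + 1) + 1 = 2 * j + 1 + 2 by ring, h, ih, mul_zero]

noncomputable def heat (t : ℂ) (Q : ℂ[X]) : ℂ[X] :=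
  ∑ j ∈ Finset.range (Q.natDegree + 1),
    (t ^ j / (j.factorial : ℂ)) • Polynomial.derivative^[2 * j] Q

lemma heat_eq_sum (t : ℂ) (Q : ℂ[X]) {N : ℕ} (hN : Q.natDegree < N) :
    heat t Q = ∑ j ∈ Finset.range N,
      (t ^ j / (j.factorial : ℂ)) • Polynomial.derivative^[2 * j] Q := by
  rw [heat]
  apply Finset.sum_subset (Finset.range_subset_range.mpr hN)
  intro j _ hj
  rw [Finset.mem_range, not_lt] at hj
  rw [Polynomial.iterate_derivative_eq_zero (by omega), smul_zero]

lemma iterate_derivative_add' (k : ℕ) (P Q : ℂ[X]) :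
    Polynomial.derivative^[k] (P + Q) =
      Polynomial.derivative^[k] P + Polynomial.derivative^[k] Q := by
  induction k with
  | zero => rfl
  | succ k ih => simp [Function.iterate_succ_apply', ih]

lemma heat_add (t : ℂ) (P Q : ℂ[X]) : heat t (P + Q) = heat t P + heat t Q := by
  set N := max (P + Q).natDegree (max P.natDegree Q.natDegree) + 1 with hNdef
  rw [heat_eq_sum t (P + Q) (N := N) (by omega), heat_eq_sum t P (N := N) (by omega),
    heat_eq_sum t Q (N := N) (by omega), ← Finset.sum_add_distrib]
  exact Finset.sum_congr rfl fun j _ => by rw [iterate_derivative_add', smul_add]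

lemma heat_smul (t b : ℂ) (Q : ℂ[X]) : heat t (b • Q) = b • heat t Q := by
  rw [heat_eq_sum t (b • Q) (N := Q.natDegree + 1)
      (lt_of_le_of_lt (Polynomial.natDegree_smul_le b Q) (Nat.lt_succ_self _)), heat,
    Finset.smul_sum]
  exact Finset.sum_congr rfl fun j _ => by
    rw [Polynomial.iterate_derivative_smul, smul_comm]

lemma heat_C (t : ℂ) (c : ℂ) : heat t (Polynomial.C c) = Polynomial.C c := by
  rw [heat]
  simp

lemma heat_deriv (t : ℂ) (Q : ℂ[X]) :
    heat t (Polynomial.derivative Q) = Polynomial.derivative (heat t Q) := by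
  rw [heat_eq_sum t (Polynomial.derivative Q) (N := Q.natDegree + 1)
      (lt_of_le_of_lt (le_trans (Polynomial.natDegree_derivative_le Q) (Nat.sub_le _ _))
        (Nat.lt_succ_self _)),
    heat, Polynomial.derivative_sum]
  exact Finset.sum_congr rfl fun j _ => by
    rw [Polynomial.derivative_smul, ← Function.iterate_succ_apply' Polynomial.derivative (2 * j) Q,
      Function.iterate_succ_apply]

lemma iter_deriv_X_mul (Q : ℂ[X]) (k : ℕ) :
    Polynomial.derivative^[k + 1] (Polynomial.X * Q) =
      Polynomial.X * Polynomial.derivative^[k + 1] Q +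
        ((k : ℂ) + 1) • Polynomial.derivative^[k] Q := by
  induction k with
  | zero =>
      simp only [zero_add, pow_one, Function.iterate_one, Function.iterate_zero, id,
        Polynomial.derivative_mul, Polynomial.derivative_X, one_mul, Nat.cast_zero]
      module
  | succ k ih =>
      rw [Function.iterate_succ_apply' Polynomial.derivative (k + 1), ih]
      rw [Polynomial.derivative_add, Polynomial.derivative_mul, Polynomial.derivative_X,
        Polynomial.derivative_smul, ← Function.iterate_succ_apply' Polynomial.derivative (k + 1),
        ← Function.iterate_succ_apply' Polynomial.derivative k]
      simp only [one_mul]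
      push_cast
      module

lemma heat_X_mul (t : ℂ) (Q : ℂ[X]) :
    heat t (Polynomial.X * Q) =
      Polynomial.X * heat t Q + (2 * t) • heat t (Polynomial.derivative Q) := by
  have hd : (Polynomial.X * Q).natDegree < Q.natDegree + 2 := by
    have h := Polynomial.natDegree_mul_le (p := (Polynomial.X : ℂ[X])) (q := Q)
    have hX : (Polynomial.X : ℂ[X]).natDegree = 1 := Polynomial.natDegree_X
    omega
  have hd' : (Polynomial.derivative Q).natDegree < Q.natDegree + 1 := by
    have h := Polynomial.natDegree_derivative_le Q
    omega
  have key : ∀ i : ℕ,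
      (t ^ (i+1) / (((i+1).factorial : ℕ) : ℂ)) •
          Polynomial.derivative^[2 * (i+1)] (Polynomial.X * Q) =
        Polynomial.X * ((t ^ (i+1) / (((i+1).factorial : ℕ) : ℂ)) •
            Polynomial.derivative^[2 * (i+1)] Q) +
          (2 * t) • ((t ^ i / ((i.factorial : ℕ) : ℂ)) •
            Polynomial.derivative^[2 * i] (Polynomial.derivative Q)) := by
    intro i
    have h2i : 2 * (i+1) = (2*i+1)+1 := by ring
    rw [h2i, iter_deriv_X_mul,
      ← Function.iterate_succ_apply Polynomial.derivative (2*i) Q]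
    rw [smul_add, mul_smul_comm, smul_smul]
    have h1 : ((i.factorial : ℕ) : ℂ) ≠ 0 := Nat.cast_ne_zero.mpr i.factorial_ne_zero
    have h2 : (((i+1).factorial : ℕ) : ℂ) ≠ 0 := Nat.cast_ne_zero.mpr (i+1).factorial_ne_zero
    have hsc : t ^ (i+1) / (((i+1).factorial : ℕ) : ℂ) * (((2*i+1 : ℕ) : ℂ) + 1) =
        2 * t * (t ^ i / ((i.factorial : ℕ) : ℂ)) := by
      have h3 : ((i:ℂ)+1) ≠ 0 := Nat.cast_add_one_ne_zero i
      rw [Nat.factorial_succ]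
      push_cast
      field_simp [h1, h3]
      ring
    rw [hsc, ← smul_smul]
  rw [heat_eq_sum t (Polynomial.X * Q) (N := Q.natDegree + 2) hd,
    heat_eq_sum t Q (N := Q.natDegree + 2) (by omega),
    heat_eq_sum t (Polynomial.derivative Q) (N := Q.natDegree + 1) hd',
    Finset.sum_range_succ' _ (Q.natDegree + 1), Finset.sum_range_succ' _ (Q.natDegree + 1)]
  simp only [key]
  rw [Finset.sum_add_distrib, mul_add, Finset.mul_sum, Finset.smul_sum]
  simp only [pow_zero, Nat.factorial_zero, Nat.cast_one, div_one, one_smul, mul_zero,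
    Function.iterate_zero, id]
  abel

lemma heat_heat_neg (t : ℂ) (Q : ℂ[X]) : heat t (heat (-t) Q) = Q := by
  suffices H : ∀ d : ℕ, ∀ Q : ℂ[X], Q.natDegree ≤ d → heat t (heat (-t) Q) = Q from
    H Q.natDegree Q le_rfl
  intro d
  induction d with
  | zero =>
      intro Q hd
      rw [Polynomial.eq_C_of_natDegree_eq_zero (Nat.le_zero.mp hd), heat_C, heat_C]
  | succ d ih =>
      intro Q hd
      rcases Nat.eq_zero_or_pos Q.natDegree with hd0 | hdpos
      · rw [Polynomial.eq_C_of_natDegree_eq_zero hd0, heat_C, heat_C]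
      · have hdecomp := Q.X_mul_divX_add
        set Q₁ := Q.divX with hQ₁
        have hdeg₁ : Q₁.natDegree ≤ d := by
          have h := Polynomial.natDegree_divX_eq_natDegree_tsub_one (p := Q)
          rw [← hQ₁] at h
          omega
        calc heat t (heat (-t) Q)
            = heat t (heat (-t) (Polynomial.X * Q₁ + Polynomial.C (Q.coeff 0))) := by
              rw [hdecomp]
          _ = heat t (Polynomial.X * heat (-t) Q₁) +
                (2 * (-t)) • heat t (heat (-t) (Polynomial.derivative Q₁)) +
                Polynomial.C (Q.coeff 0) := by
              rw [heat_add, heat_add, heat_C, heat_C, heat_X_mul, heat_add, heat_smul]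
          _ = Polynomial.X * heat t (heat (-t) Q₁) +
                ((2 * t) • heat t (heat (-t) (Polynomial.derivative Q₁)) +
                 (2 * (-t)) • heat t (heat (-t) (Polynomial.derivative Q₁))) +
                Polynomial.C (Q.coeff 0) := by
              rw [heat_X_mul, ← heat_deriv]
              abel
          _ = Polynomial.X * Q₁ + Polynomial.C (Q.coeff 0) := by
              rw [ih Q₁ hdeg₁]
              congr 1
              rw [show (2 * t) • heat t (heat (-t) (Polynomial.derivative Q₁)) +
                    (2 * (-t)) • heat t (heat (-t) (Polynomial.derivative Q₁)) =
                  ((2 * t) + (2 * (-t))) • heat t (heat (-t) (Polynomial.derivative Q₁)) from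
                (add_smul _ _ _).symm]
              simp
          _ = Q := hdecomp

noncomputable def Aop (P : ℂ[X]) : ℂ[X] := Polynomial.X * P + Polynomial.derivative P

lemma heat_pow_mul (n : ℕ) (Q : ℂ[X]) :
    heat (1/2 : ℂ) (Polynomial.X ^ n * heat (-(1/2) : ℂ) Q) = Aop^[n] Q := by
  induction n with
  | zero => simpa using heat_heat_neg (1/2) Q
  | succ n ih =>
      rw [pow_succ, show Polynomial.X ^ n * Polynomial.X = Polynomial.X * Polynomial.X ^ n from
        mul_comm _ _, mul_assoc, heat_X_mul, heat_deriv, ih,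
        Function.iterate_succ_apply' Aop n Q, Aop]
      norm_num

lemma eval_iter_deriv_X_mul_eq_zero {Q : ℂ[X]} {a : ℂ} {n j : ℕ}
    (h : ∀ i < n, (Polynomial.derivative^[i] Q).eval a = 0) (hj : j < n) :
    (Polynomial.derivative^[j] (Polynomial.X * Q)).eval a = 0 := by
  cases j with
  | zero => rw [Function.iterate_zero_apply, Polynomial.eval_mul,
        show Polynomial.eval a Q = 0 from h 0 (by omega), mul_zero]
  | succ k =>
      rw [iter_deriv_X_mul, Polynomial.eval_add, Polynomial.eval_mul, h (k+1) (by omega),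
        mul_zero, Polynomial.eval_smul, h k (by omega), smul_zero, add_zero]

lemma eval_Aop_iter (n : ℕ) (Q : ℂ[X]) (a : ℂ)
    (h : ∀ j < n, (Polynomial.derivative^[j] Q).eval a = 0) :
    (Aop^[n] Q).eval a = (Polynomial.derivative^[n] Q).eval a := by
  induction n generalizing Q with
  | zero => rfl
  | succ n ih =>
      rw [Function.iterate_succ_apply]
      have hAQ : ∀ j < n, (Polynomial.derivative^[j] (Aop Q)).eval a = 0 := by
        intro j hj
        rw [Aop, iterate_derivative_add', Polynomial.eval_add,
          eval_iter_deriv_X_mul_eq_zero h (by omega),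
          ← Function.iterate_succ_apply, h (j+1) (by omega), add_zero]
      rw [ih (Aop Q) hAQ, Aop, iterate_derivative_add', Polynomial.eval_add,
        eval_iter_deriv_X_mul_eq_zero h (by omega),
        ← Function.iterate_succ_apply, zero_add]

lemma sum_range_two_mul {M : Type*} [AddCommMonoid M] (f : ℕ → M) (N : ℕ) :
    ∑ p ∈ Finset.range (2 * N), f p =
      ∑ j ∈ Finset.range N, f (2 * j) + ∑ j ∈ Finset.range N, f (2 * j + 1) := by
  induction N with
  | zero => simp
  | succ N ih =>
      rw [show 2 * (N + 1) = (2 * N + 1) + 1 by ring, Finset.sum_range_succ, Finset.sum_range_succ,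
        ih, Finset.sum_range_succ, Finset.sum_range_succ]
      abel

lemma gauss_integrable_complex (p : ℕ) :
    Integrable (fun u : ℝ => Complex.exp (-(u:ℂ)^2/2) * (u:ℂ)^p) := by
  have h := (gauss_integrable p).ofReal (𝕜 := ℂ)
  apply h.congr
  filter_upwards with u
  norm_cast
  rw [mul_comm]
  rfl

lemma integral_gauss_complex_pow (p : ℕ) :
    ∫ u : ℝ, Complex.exp (-(u:ℂ)^2/2) * (u:ℂ)^p =
      ((∫ u : ℝ, u ^ p * Real.exp (-u ^ 2 / 2) : ℝ) : ℂ) := by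
  have h1 := integral_ofReal (𝕜 := ℂ) (f := fun u : ℝ => u ^ p * Real.exp (-u ^ 2 / 2))
    (μ := (volume : Measure ℝ))
  have h2 : ((∫ u : ℝ, u ^ p * Real.exp (-u ^ 2 / 2) : ℝ) : ℂ) =
      ∫ u : ℝ, ((u ^ p * Real.exp (-u ^ 2 / 2) : ℝ) : ℂ) := h1.symm
  rw [h2]
  congr 1 with u
  norm_cast
  rw [mul_comm]

lemma integral_gauss_poly (Q : ℂ[X]) (z c : ℂ) :
    ∫ u : ℝ, Complex.exp (-(u:ℂ)^2/2) * Q.eval (z + c * (u:ℂ)) =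
      (Real.sqrt (2 * Real.pi) : ℂ) * (heat (c^2/2) Q).eval z := by
  set N := Q.natDegree + 1 with hN
  have hpt : ∀ u : ℝ, Q.eval (z + c * (u:ℂ)) =
      ∑ p ∈ Finset.range (2 * N), ((Polynomial.taylor z Q).coeff p * c ^ p) * (u:ℂ) ^ p := by
    intro u
    rw [show z + c * (u:ℂ) = c * (u:ℂ) + z by ring, ← Polynomial.taylor_eval,
      Polynomial.eval_eq_sum_range' (n := 2 * N)
        (by rw [Polynomial.natDegree_taylor]; omega)]
    exact Finset.sum_congr rfl fun p _ => by ring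
  calc ∫ u : ℝ, Complex.exp (-(u:ℂ)^2/2) * Q.eval (z + c * (u:ℂ))
      = ∫ u : ℝ, ∑ p ∈ Finset.range (2 * N),
          ((Polynomial.taylor z Q).coeff p * c ^ p) * (Complex.exp (-(u:ℂ)^2/2) * (u:ℂ) ^ p) := by
        congr 1 with u
        rw [hpt u, Finset.mul_sum]
        exact Finset.sum_congr rfl fun p _ => by ring
    _ = ∑ p ∈ Finset.range (2 * N),
          ((Polynomial.taylor z Q).coeff p * c ^ p) *
            ((∫ u : ℝ, u ^ p * Real.exp (-u ^ 2 / 2) : ℝ) : ℂ) := by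
        rw [integral_finset_sum _ fun p _ => ((gauss_integrable_complex p).const_mul _)]
        exact Finset.sum_congr rfl fun p _ => by
          rw [integral_const_mul, integral_gauss_complex_pow]
    _ = ∑ j ∈ Finset.range N,
          ((Polynomial.taylor z Q).coeff (2 * j) * c ^ (2 * j)) *
            ((Real.sqrt (2 * Real.pi) * (2 * j).factorial / (2 ^ j * j.factorial) : ℝ) : ℂ) := by
        rw [sum_range_two_mul]
        have hodd : ∀ j ∈ Finset.range N,
            ((Polynomial.taylor z Q).coeff (2 * j + 1) * c ^ (2 * j + 1)) *
              ((∫ u : ℝ, u ^ (2 * j + 1) * Real.exp (-u ^ 2 / 2) : ℝ) : ℂ) = 0 := by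
          intro j _
          rw [gauss_moment_odd j]
          simp
        rw [Finset.sum_congr rfl hodd, Finset.sum_const_zero, add_zero]
        exact Finset.sum_congr rfl fun j _ => by rw [gauss_moment_even j]
    _ = (Real.sqrt (2 * Real.pi) : ℂ) * (heat (c^2/2) Q).eval z := by
        rw [heat_eq_sum (c^2/2) Q (N := N) (by omega), Polynomial.eval_finset_sum,
          Finset.mul_sum]
        refine Finset.sum_congr rfl fun j _ => ?_
        have hiter : Polynomial.derivative^[2 * j] Q = (2 * j).factorial • Polynomial.hasseDeriv (2 * j) Q := by
          rw [← Polynomial.factorial_smul_hasseDeriv]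
          rfl
        rw [Polynomial.eval_smul, hiter, Polynomial.eval_smul,
          ← Polynomial.taylor_coeff]
        have hfac : ((j.factorial : ℕ) : ℂ) ≠ 0 := Nat.cast_ne_zero.mpr j.factorial_ne_zero
        have h2 : ((2:ℂ)) ^ j ≠ 0 := by norm_num
        simp only [nsmul_eq_mul]
        push_cast
        field_simp
        rw [smul_eq_mul, div_pow]
        field_simp
        ring

lemma eval_iter_deriv_pow_mul (a : ℂ) (n j : ℕ) (R : ℂ[X]) (hj : j < n) :
    (Polynomial.derivative^[j] ((Polynomial.X - Polynomial.C a) ^ n * R)).eval a = 0 := by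
  rw [Polynomial.iterate_derivative_mul, Polynomial.eval_finset_sum]
  refine Finset.sum_eq_zero fun k hk => ?_
  rw [Polynomial.iterate_derivative_X_sub_pow]
  simp [sub_self, zero_pow (by omega : n - (j - k) ≠ 0)]

lemma eval_iter_deriv_pow_mul_self (a : ℂ) (n : ℕ) (R : ℂ[X]) :
    (Polynomial.derivative^[n] ((Polynomial.X - Polynomial.C a) ^ n * R)).eval a =
      (n.factorial : ℂ) * R.eval a := by
  rw [Polynomial.iterate_derivative_mul, Polynomial.eval_finset_sum]
  rw [Finset.sum_eq_single 0]
  · simp [Polynomial.iterate_derivative_X_sub_pow_self]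
  · intro k hk hk0
    rw [Polynomial.iterate_derivative_X_sub_pow]
    have hkn : k ≤ n := by simpa using Finset.mem_range_succ_iff.mp hk
    simp [sub_self, zero_pow (by omega : n - (n - k) ≠ 0)]
  · intro h
    simp at h

end AuxMHP

theorem stmt_2 (m : ℕ) (hm : 1 ≤ m) (a : Fin m → ℝ) (ha : Function.Injective a)
    (n : Fin m → ℕ) (hn : ∀ k, 1 ≤ n k) :
    ∀ k : Fin m,
      ∫ x : ℝ, mhP a n x * (x : ℂ) ^ (n k) *
        Complex.exp (-(x : ℂ) ^ 2 / 2 + (a k : ℂ) * (x : ℂ)) =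
      ((Real.sqrt (2 * Real.pi) * (n k).factorial * Real.exp ((a k) ^ 2 / 2) *
        ∏ l ∈ Finset.univ.erase k, (a k - a l) ^ (n l) : ℝ) : ℂ) := by
  intro k
  classical
  set Q : Polynomial ℂ := ∏ l, (Polynomial.X - Polynomial.C ((a l : ℂ))) ^ (n l) with hQ
  set R : Polynomial ℂ :=
    ∏ l ∈ Finset.univ.erase k, (Polynomial.X - Polynomial.C ((a l : ℂ))) ^ (n l) with hR
  have hQR : Q = (Polynomial.X - Polynomial.C ((a k : ℂ))) ^ (n k) * R :=
    (Finset.mul_prod_erase _ _ (Finset.mem_univ k)).symm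
  have hsqrt : (0:ℝ) < Real.sqrt (2 * Real.pi) := Real.sqrt_pos.mpr (by positivity)
  have hsqrtC : ((Real.sqrt (2 * Real.pi) : ℝ) : ℂ) ≠ 0 := by exact_mod_cast hsqrt.ne'
  -- identify mhP with the heat-transformed polynomial
  have hmhP : ∀ x : ℝ, mhP a n x = (heat (-(1/2) : ℂ) Q).eval (x:ℂ) := by
    intro x
    rw [mhP]
    have hint_eq : (∫ u : ℝ, Complex.exp (-(u:ℂ)^2/2) *
        ∏ l, ((x:ℂ) - (a l : ℂ) + Complex.I * (u:ℂ)) ^ (n l))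
        = ∫ u : ℝ, Complex.exp (-(u:ℂ)^2/2) * Q.eval ((x:ℂ) + Complex.I * (u:ℂ)) := by
      congr 1 with u
      congr 1
      rw [hQ, Polynomial.eval_prod]
      refine Finset.prod_congr rfl fun l _ => ?_
      rw [Polynomial.eval_pow, Polynomial.eval_sub, Polynomial.eval_X, Polynomial.eval_C]
      congr 1
      ring
    rw [hint_eq, integral_gauss_poly Q (x:ℂ) Complex.I,
      show Complex.I ^ 2 / 2 = -(1/2 : ℂ) by rw [Complex.I_sq]; norm_num,
      ← mul_assoc, inv_mul_cancel₀ hsqrtC, one_mul]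
  set g : Polynomial ℂ := Polynomial.X ^ (n k) * heat (-(1/2) : ℂ) Q with hg
  have hpt : ∀ x : ℝ, mhP a n x * (x : ℂ) ^ (n k) *
      Complex.exp (-(x : ℂ) ^ 2 / 2 + (a k : ℂ) * (x : ℂ)) =
      Complex.exp (((a k : ℂ))^2/2) *
        (Complex.exp (-((x:ℂ) - (a k : ℂ))^2/2) * g.eval (x:ℂ)) := by
    intro x
    rw [hmhP x, hg, Polynomial.eval_mul, Polynomial.eval_pow, Polynomial.eval_X,
      show (-(x : ℂ) ^ 2 / 2 + (a k : ℂ) * (x : ℂ)) =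
        (-((x:ℂ) - (a k : ℂ))^2/2 + ((a k : ℂ))^2/2) by ring,
      Complex.exp_add]
    ring
  calc ∫ x : ℝ, mhP a n x * (x : ℂ) ^ (n k) *
        Complex.exp (-(x : ℂ) ^ 2 / 2 + (a k : ℂ) * (x : ℂ))
      = ∫ x : ℝ, Complex.exp (((a k : ℂ))^2/2) *
          (Complex.exp (-((x:ℂ) - (a k : ℂ))^2/2) * g.eval (x:ℂ)) := by
        congr 1 with x
        exact hpt x
    _ = Complex.exp (((a k : ℂ))^2/2) *
          ∫ x : ℝ, Complex.exp (-((x:ℂ) - (a k : ℂ))^2/2) * g.eval (x:ℂ) := by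
        rw [integral_const_mul]
    _ = Complex.exp (((a k : ℂ))^2/2) *
          ∫ u : ℝ, Complex.exp (-(u:ℂ)^2/2) * g.eval ((a k : ℂ) + 1 * (u:ℂ)) := by
        congr 1
        rw [← integral_add_right_eq_self
          (fun x : ℝ => Complex.exp (-((x:ℂ) - (a k : ℂ))^2/2) * g.eval (x:ℂ)) (a k)]
        congr 1 with u
        have h1 : (((u + a k : ℝ)) : ℂ) = (u:ℂ) + (a k : ℂ) := by push_cast; ring
        rw [h1]
        congr 2
        · ring
        · ring
    _ = Complex.exp (((a k : ℂ))^2/2) *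
          ((Real.sqrt (2 * Real.pi) : ℂ) * (heat ((1:ℂ)^2/2) g).eval ((a k : ℂ))) := by
        rw [integral_gauss_poly g ((a k : ℂ)) 1]
    _ = ((Real.sqrt (2 * Real.pi) * (n k).factorial * Real.exp ((a k) ^ 2 / 2) *
          ∏ l ∈ Finset.univ.erase k, (a k - a l) ^ (n l) : ℝ) : ℂ) := by
        rw [show ((1:ℂ)^2/2) = (1/2 : ℂ) by norm_num, hg, heat_pow_mul,
          eval_Aop_iter (n k) Q (a k : ℂ) (fun j hj => by
            rw [hQR]; exact eval_iter_deriv_pow_mul _ _ _ _ hj)]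
        rw [hQR, eval_iter_deriv_pow_mul_self]
        rw [hR, Polynomial.eval_prod]
        push_cast [Complex.ofReal_exp]
        simp only [Polynomial.eval_pow, Polynomial.eval_sub, Polynomial.eval_X,
          Polynomial.eval_C]
        ring
end

section
/- For every k ∈ {1, …, m} and every real r with 0 < r < min_{l≠k} |a_k − a_l|, there exists a polynomial A_k with real coefficients of degree at most n_k − 1 such that for every x ∈ ℝ, (1/(√(2π)·2πi)) · ∮_{|t − a_k| = r} exp(−(t−x)²/2) · ∏_{l=1}^m (t − a_l)^{−n_l} dt = A_k(x) · exp(−x²/2 + a_k x), where the circle integral is taken counterclockwise over the circle of center a_k and radius r. -/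
open MeasureTheory Finset Metric

lemma hasDerivAt_iteratedDeriv_analytic {h : ℂ → ℂ} {U : Set ℂ}
    (hh : AnalyticOnNhd ℂ h U) (j : ℕ) {t : ℂ} (ht : t ∈ U) :
    HasDerivAt (iteratedDeriv j h) (iteratedDeriv (j + 1) h t) t := by
  have h1 : DifferentiableAt ℂ (iteratedDeriv j h) t := by
    rw [iteratedDeriv_eq_iterate]; exact (hh.iterated_deriv j t ht).differentiableAt
  have h2 := h1.hasDerivAt
  rwa [iteratedDeriv_succ]

lemma iteratedDeriv_exp_mul (x : ℂ) (j : ℕ) :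
    iteratedDeriv j (fun t : ℂ => Complex.exp (t * x)) = fun c => x ^ j * Complex.exp (c * x) := by
  induction j with
  | zero => simp [iteratedDeriv_zero]
  | succ j ih =>
    rw [iteratedDeriv_succ, ih]
    funext c
    have h1 := (((hasDerivAt_id c).mul_const x).cexp).const_mul (x ^ j)
    simp only [id_eq, one_mul] at h1
    rw [h1.deriv]; ring

lemma iteratedDeriv_mul_analytic {f g : ℂ → ℂ} {U : Set ℂ} (hU : IsOpen U)
    (hf : AnalyticOnNhd ℂ f U) (hg : AnalyticOnNhd ℂ g U) (N : ℕ) :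
    ∀ t ∈ U, iteratedDeriv N (fun s => f s * g s) t =
      ∑ j ∈ range (N + 1), (N.choose j : ℂ) * (iteratedDeriv j f t * iteratedDeriv (N - j) g t) := by
  induction N with
  | zero => intro t ht; simp [iteratedDeriv_zero]
  | succ N ih =>
    intro t ht
    rw [iteratedDeriv_succ]
    have hev : deriv (iteratedDeriv N fun s => f s * g s) t =
        deriv (fun t => ∑ j ∈ range (N + 1),
          (N.choose j : ℂ) * (iteratedDeriv j f t * iteratedDeriv (N - j) g t)) t := by
      apply Filter.EventuallyEq.deriv_eq
      filter_upwards [hU.mem_nhds ht] with s hs using ih s hs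
    rw [hev]
    have hsum : HasDerivAt (fun t => ∑ j ∈ range (N + 1),
        (N.choose j : ℂ) * (iteratedDeriv j f t * iteratedDeriv (N - j) g t))
        (∑ j ∈ range (N + 1), (N.choose j : ℂ) *
          (iteratedDeriv (j + 1) f t * iteratedDeriv (N - j) g t +
           iteratedDeriv j f t * iteratedDeriv (N - j + 1) g t)) t := by
      apply HasDerivAt.fun_sum
      intro j hj
      exact (((hasDerivAt_iteratedDeriv_analytic hf j ht).mul
        (hasDerivAt_iteratedDeriv_analytic hg (N - j) ht)).const_mul _)
    rw [hsum.deriv]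
    rw [Finset.sum_choose_succ_mul (fun i j => iteratedDeriv i f t * iteratedDeriv j g t) N]
    simp only [mul_add, Finset.sum_add_distrib]
    rw [add_comm]
    congr 1
    apply Finset.sum_congr rfl
    intro j hj
    have hjN : j ≤ N := Nat.lt_succ_iff.mp (Finset.mem_range.mp hj)
    rw [Nat.succ_sub hjN]

lemma im_iteratedDeriv_zero {g : ℂ → ℂ} {U : Set ℂ} (hU : IsOpen U)
    (hg : AnalyticOnNhd ℂ g U)
    (hreal : ∀ y : ℝ, (y : ℂ) ∈ U → (g y).im = 0) (i : ℕ) :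
    ∀ y : ℝ, (y : ℂ) ∈ U → (iteratedDeriv i g y).im = 0 := by
  induction i with
  | zero => simpa [iteratedDeriv_zero] using hreal
  | succ i ih =>
    intro y hy
    have hd : HasDerivAt (iteratedDeriv i g) (iteratedDeriv (i + 1) g ↑y) ↑y :=
      hasDerivAt_iteratedDeriv_analytic hg i hy
    have hR : HasDerivAt (fun s : ℝ => iteratedDeriv i g ↑s) (iteratedDeriv (i + 1) g ↑y) y :=
      hd.comp_ofReal
    have hIm : HasDerivAt (fun s : ℝ => (iteratedDeriv i g ↑s).im)
        ((iteratedDeriv (i + 1) g ↑y).im) y := by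
      have h := Complex.imCLM.hasFDerivAt.comp_hasDerivAt y hR
      simp only [Function.comp_def, Complex.imCLM_apply] at h
      exact h
    have hev : (fun s : ℝ => (iteratedDeriv i g ↑s).im) =ᶠ[nhds y] fun _ => 0 := by
      have hmem : ∀ᶠ s : ℝ in nhds y, (s : ℂ) ∈ U :=
        (Complex.continuous_ofReal.continuousAt).preimage_mem_nhds (hU.mem_nhds hy)
      filter_upwards [hmem] with s hs using ih s hs
    have h0 : deriv (fun s : ℝ => (iteratedDeriv i g ↑s).im) y = 0 := by
      rw [hev.deriv_eq]; simp
    rw [← hIm.deriv]; exact h0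

theorem stmt_3 (m : ℕ) (hm : 1 ≤ m) (a : Fin m → ℝ) (ha : Function.Injective a)
    (n : Fin m → ℕ) (hn : ∀ k, 1 ≤ n k)
    (k : Fin m) (r : ℝ) (hr : 0 < r) (hrk : ∀ l, l ≠ k → r < |a k - a l|) :
    ∃ A : Polynomial ℝ, A.natDegree ≤ n k - 1 ∧
      ∀ x : ℝ,
        ((Real.sqrt (2 * Real.pi) : ℂ) * (2 * Real.pi * Complex.I))⁻¹ *
          (∮ t in C((a k : ℂ), r),
            Complex.exp (-(t - (x : ℂ)) ^ 2 / 2) *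
              ∏ l, (t - (a l : ℂ)) ^ (-(n l : ℤ))) =
        ((A.eval x : ℝ) : ℂ) * Real.exp (-x ^ 2 / 2 + a k * x) := by
  classical
  set c : ℂ := (a k : ℂ) with hc_def
  set N : ℕ := n k - 1 with hN_def
  have hNk : n k = N + 1 := (Nat.succ_pred_eq_of_pos (hn k)).symm
  set g : ℂ → ℂ := fun t => Complex.exp (-t ^ 2 / 2) *
      ∏ l ∈ univ.erase k, (t - (a l : ℂ)) ^ (-(n l : ℤ)) with hg_def
  -- nonvanishing on the closed ball
  have hne : ∀ t ∈ closedBall c r, ∀ l, l ≠ k → t - (a l : ℂ) ≠ 0 := by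
    intro t ht l hl h0
    have ht' : dist t c ≤ r := mem_closedBall.mp ht
    have heq : t = (a l : ℂ) := sub_eq_zero.mp h0
    have : |a k - a l| = dist c t := by
      rw [heq, hc_def, Complex.dist_eq, ← Complex.ofReal_sub, Complex.norm_real, Real.norm_eq_abs, abs_sub_comm]
    have := hrk l hl
    rw [‹|a k - a l| = dist c t›, dist_comm] at this
    linarith
  -- differentiability of g
  have hg_diff : DifferentiableOn ℂ g (closedBall c r) := by
    intro t ht
    apply DifferentiableAt.differentiableWithinAt
    apply DifferentiableAt.mul
    · exact (((differentiableAt_pow 2).neg).div_const 2).cexp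
    · apply DifferentiableAt.fun_finsetProd
      intro l hl
      exact (differentiableAt_id.sub_const _).zpow
        (Or.inl (hne t ht l (Finset.ne_of_mem_erase hl)))
  have hg_an : AnalyticOnNhd ℂ g (ball c r) :=
    (hg_diff.mono ball_subset_closedBall).analyticOnNhd isOpen_ball
  have hcmem : c ∈ ball c r := mem_ball_self hr
  -- realness of g on reals
  have hreal : ∀ y : ℝ, (y : ℂ) ∈ ball c r → (g y).im = 0 := by
    intro y _
    have : g ↑y = ((Real.exp (-y ^ 2 / 2) *
        ∏ l ∈ univ.erase k, (y - a l) ^ (-(n l : ℤ)) : ℝ) : ℂ) := by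
      rw [hg_def]
      push_cast [Complex.ofReal_exp]
      ring
    rw [this, Complex.ofReal_im]
  set b : ℕ → ℝ := fun i => (iteratedDeriv i g c).re with hb_def
  have hb : ∀ i, iteratedDeriv i g c = ((b i : ℝ) : ℂ) := by
    intro i
    have him := im_iteratedDeriv_zero isOpen_ball hg_an hreal i (a k) hcmem
    apply Complex.ext
    · simp [hb_def]
    · simpa [Complex.ofReal_im] using him
  -- the polynomial
  refine ⟨∑ j ∈ range (N + 1), Polynomial.C ((Real.sqrt (2 * Real.pi))⁻¹ *
      (N.factorial : ℝ)⁻¹ * (N.choose j : ℝ) * b (N - j)) * Polynomial.X ^ j, ?_, ?_⟩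
  · apply Polynomial.natDegree_sum_le_of_forall_le
    intro j hj
    exact le_trans (Polynomial.natDegree_C_mul_X_pow_le _ _)
      (Nat.lt_succ_iff.mp (Finset.mem_range.mp hj))
  intro x
  -- the analytic function h
  have hh_diff : DifferentiableOn ℂ (fun t => Complex.exp (t * (x : ℂ)) * g t)
      (closedBall c r) := by
    intro t ht
    exact ((differentiableAt_id.mul_const _).cexp.differentiableWithinAt).mul (hg_diff t ht)
  have hrpos : (0 : NNReal) < r.toNNReal := Real.toNNReal_pos.mpr hr
  have hRr : (r.toNNReal : ℝ) = r := Real.coe_toNNReal r hr.le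
  have hps : HasFPowerSeriesOnBall (fun t => Complex.exp (t * (x : ℂ)) * g t)
      (cauchyPowerSeries (fun t => Complex.exp (t * (x : ℂ)) * g t) c r.toNNReal) c r.toNNReal := by
    apply DifferentiableOn.hasFPowerSeriesOnBall _ hrpos
    rwa [hRr]
  have hkey := hps.factorial_smul (1 : ℂ) N
  rw [← iteratedDeriv_eq_iteratedFDeriv] at hkey
  rw [hRr] at hkey
  have hpiN := cauchyPowerSeries_apply (fun t => Complex.exp (t * (x : ℂ)) * g t) c r N 1
  -- nonzero constants
  have hpi0 : (2 * (Real.pi : ℂ) * Complex.I) ≠ 0 := by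
    simp [Real.pi_ne_zero, Complex.I_ne_zero, Complex.ofReal_ne_zero]
  have hfac0 : ((N.factorial : ℂ)) ≠ 0 := by
    exact_mod_cast Nat.cast_ne_zero.mpr (Nat.factorial_ne_zero N)
  -- Leibniz
  have hfan : AnalyticOnNhd ℂ (fun t : ℂ => Complex.exp (t * (x : ℂ))) (ball c r) :=
    (((differentiable_id.mul_const _).cexp).differentiableOn).analyticOnNhd isOpen_ball
  have hlb := iteratedDeriv_mul_analytic isOpen_ball hfan hg_an N c hcmem
  have hiter : iteratedDeriv N (fun t => Complex.exp (t * (x : ℂ)) * g t) c =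
      Complex.exp (c * (x : ℂ)) *
        ∑ j ∈ range (N + 1), (N.choose j : ℂ) * ((x : ℂ) ^ j * ((b (N - j) : ℝ) : ℂ)) := by
    rw [hlb, Finset.mul_sum]
    apply Finset.sum_congr rfl
    intro j hj
    rw [iteratedDeriv_exp_mul (x : ℂ) j, hb]
    ring
  -- value of the circle integral
  have hI0 : (∮ z in C(c, r), ((1 : ℂ) / (z - c)) ^ N • (z - c)⁻¹ •
        (Complex.exp (z * (x : ℂ)) * g z)) =
      (2 * (Real.pi : ℂ) * Complex.I) * ((N.factorial : ℂ)⁻¹ *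
        (Complex.exp (c * (x : ℂ)) *
          ∑ j ∈ range (N + 1), (N.choose j : ℂ) * ((x : ℂ) ^ j * ((b (N - j) : ℝ) : ℂ)))) := by
    rw [← hiter]
    have h1 : (cauchyPowerSeries (fun t => Complex.exp (t * (x : ℂ)) * g t) c r N fun _ => 1) =
        (N.factorial : ℂ)⁻¹ * iteratedDeriv N (fun t => Complex.exp (t * (x : ℂ)) * g t) c := by
      rw [← hkey, nsmul_eq_mul]
      rw [← mul_assoc, inv_mul_cancel₀ hfac0, one_mul]
    rw [← h1, hpiN, smul_eq_mul, ← mul_assoc, mul_inv_cancel₀ hpi0, one_mul]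
  -- rewrite the original integral
  have horig : (∮ t in C(c, r), Complex.exp (-(t - (x : ℂ)) ^ 2 / 2) *
        ∏ l, (t - (a l : ℂ)) ^ (-(n l : ℤ))) =
      Complex.exp (-(x : ℂ) ^ 2 / 2) *
        ∮ z in C(c, r), ((1 : ℂ) / (z - c)) ^ N • (z - c)⁻¹ •
          (Complex.exp (z * (x : ℂ)) * g z) := by
    rw [← circleIntegral.integral_const_mul]
    apply circleIntegral.integral_congr hr.le
    intro t ht
    beta_reduce
    have htc : t - c ≠ 0 := by
      have : dist t c = r := mem_sphere.mp ht
      intro h0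
      rw [sub_eq_zero.mp h0] at this
      simp at this
      linarith
    have htcb : t ∈ closedBall c r := sphere_subset_closedBall ht
    have hprod : ∏ l, (t - (a l : ℂ)) ^ (-(n l : ℤ)) =
        (t - c) ^ (-(n k : ℤ)) * ∏ l ∈ univ.erase k, (t - (a l : ℂ)) ^ (-(n l : ℤ)) :=
      (Finset.mul_prod_erase univ _ (mem_univ k)).symm
    have hzpow : (t - c) ^ (-(n k : ℤ)) = ((1 : ℂ) / (t - c)) ^ N * (t - c)⁻¹ := by
      rw [hNk, zpow_neg, zpow_natCast, pow_succ, mul_inv, ← inv_pow, one_div]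
    have hexp : Complex.exp (-(t - (x : ℂ)) ^ 2 / 2) =
        Complex.exp (-(x : ℂ) ^ 2 / 2) * (Complex.exp (t * (x : ℂ)) *
          Complex.exp (-t ^ 2 / 2)) := by
      rw [← Complex.exp_add, ← Complex.exp_add]
      congr 1
      ring
    rw [hprod, hzpow, hexp, hg_def]
    simp only [smul_eq_mul]
    ring
  rw [horig, hI0]
  -- right-hand side
  have hevA : ((Polynomial.eval x (∑ j ∈ range (N + 1), Polynomial.C
      ((Real.sqrt (2 * Real.pi))⁻¹ * (N.factorial : ℝ)⁻¹ * (N.choose j : ℝ) * b (N - j)) *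
      Polynomial.X ^ j) : ℝ) : ℂ) =
      ∑ j ∈ range (N + 1), ((Real.sqrt (2 * Real.pi) : ℂ))⁻¹ * ((N.factorial : ℂ))⁻¹ *
        ((N.choose j : ℂ)) * ((b (N - j) : ℝ) : ℂ) * (x : ℂ) ^ j := by
    rw [Polynomial.eval_finset_sum]
    push_cast
    simp [Polynomial.eval_mul, Polynomial.eval_pow]
  rw [hevA]
  have hexp2 : ((Real.exp (-x ^ 2 / 2 + a k * x) : ℝ) : ℂ) =
      Complex.exp (-(x : ℂ) ^ 2 / 2) * Complex.exp (c * (x : ℂ)) := by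
    rw [Complex.ofReal_exp, ← Complex.exp_add]
    congr 1
    push_cast
    ring
  rw [hexp2]
  have hsqrt0 : ((Real.sqrt (2 * Real.pi) : ℂ)) ≠ 0 := by
    simp only [Complex.ofReal_ne_zero]
    positivity
  simp only [Finset.mul_sum, Finset.sum_mul]
  apply Finset.sum_congr rfl
  intro j hj
  have h2 : (2 * (Real.pi : ℂ) * Complex.I)⁻¹ * (2 * (Real.pi : ℂ) * Complex.I) = 1 :=
    inv_mul_cancel₀ hpi0
  linear_combination ((Real.sqrt (2 * Real.pi) : ℂ))⁻¹ * ((N.factorial : ℂ))⁻¹ *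
    ((N.choose j : ℂ)) * ((b (N - j) : ℝ) : ℂ) * (x : ℂ) ^ j *
    Complex.exp (-(x : ℂ) ^ 2 / 2) * Complex.exp (c * (x : ℂ)) * h2
end

section
/- For every k ∈ {1, …, m}: ∫_{x∈ℝ} P_{(n_1,…,n_m)}(x) · x^{n_k} · exp(−x²/2 + a_k x) dx = n_k · ∫_{x∈ℝ} P_{(n_1,…,n_m)−e_k}(x) · x^{n_k−1} · exp(−x²/2 + a_k x) dx, where (n_1,…,n_m) − e_k denotes the multi-index obtained by decreasing the k-th entry by one. -/
open MeasureTheory Finset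

open Filter
open MeasureTheory Finset Filter

lemma gauss_poly_integrable {b : ℝ} (hb : 0 < b) (C : ℝ) (N : ℕ) :
    Integrable (fun u : ℝ => (C + |u|) ^ N * Real.exp (-b * u ^ 2)) := by
  have h : ∀ u : ℝ, (C + |u|) ^ N * Real.exp (-b * u ^ 2)
      = ∑ j ∈ Finset.range (N + 1),
        (C ^ j * (N.choose j : ℝ)) * (|u| ^ (N - j) * Real.exp (-b * u ^ 2)) := by
    intro u
    rw [add_pow, Finset.sum_mul]
    refine Finset.sum_congr rfl fun j hj => by ring
  simp_rw [h]
  refine integrable_finset_sum _ fun j hj => Integrable.const_mul ?_ _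
  have h1 := (integrable_rpow_mul_exp_neg_mul_sq hb (s := ((N - j : ℕ) : ℝ))
    (by exact_mod_cast neg_one_lt_zero.trans_le (Nat.cast_nonneg _))).abs
  simp only [Real.rpow_natCast] at h1
  simpa [abs_mul, abs_pow, Real.abs_exp] using h1

lemma gauss_poly_tendsto_atTop {b : ℝ} (hb : 0 < b) (C : ℝ) (N : ℕ) :
    Tendsto (fun u : ℝ => (C + |u|) ^ N * Real.exp (-b * u ^ 2)) atTop (nhds 0) := by
  have key : Tendsto (fun u : ℝ => (2 : ℝ) ^ N * (u ^ N * Real.exp (-u))) atTop (nhds 0) := by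
    simpa using (Real.tendsto_pow_mul_exp_neg_atTop_nhds_zero N).const_mul ((2 : ℝ) ^ N)
  refine squeeze_zero' ?_ ?_ key
  · filter_upwards [eventually_ge_atTop (|C| + 1)] with u hu
    have h0 : 0 ≤ C + |u| := by
      have := neg_abs_le C; have := abs_nonneg u; nlinarith [le_abs_self u, abs_nonneg C]
    positivity
  · filter_upwards [eventually_ge_atTop (max (|C|) (1/b))] with u hu
    have hu1 : |C| ≤ u := le_trans (le_max_left _ _) hu
    have hu2 : 1/b ≤ u := le_trans (le_max_right _ _) hu
    have hu0 : 0 ≤ u := le_trans (abs_nonneg C) hu1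
    have h1 : (C + |u|) ^ N ≤ (2*u) ^ N := by
      refine pow_le_pow_left₀ ?_ ?_ N
      · nlinarith [neg_abs_le C, abs_of_nonneg hu0]
      · nlinarith [le_abs_self C, abs_of_nonneg hu0]
    have h2 : Real.exp (-b * u ^ 2) ≤ Real.exp (-u) := by
      apply Real.exp_le_exp.2
      have hbu : 1 ≤ b * u := by
        rw [div_le_iff₀ hb] at hu2; nlinarith
      nlinarith
    calc (C + |u|) ^ N * Real.exp (-b * u ^ 2) ≤ (2*u) ^ N * Real.exp (-u) := by
          apply mul_le_mul h1 h2 (Real.exp_nonneg _) (by positivity)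
      _ = (2:ℝ)^N * (u ^ N * Real.exp (-u)) := by ring

lemma gauss_poly_tendsto_atBot {b : ℝ} (hb : 0 < b) (C : ℝ) (N : ℕ) :
    Tendsto (fun u : ℝ => (C + |u|) ^ N * Real.exp (-b * u ^ 2)) atBot (nhds 0) := by
  have h := (gauss_poly_tendsto_atTop hb C N).comp tendsto_neg_atBot_atTop
  simpa [Function.comp_def] using h

lemma integrable_of_gauss_bound {g : ℝ → ℂ} (hg : AEStronglyMeasurable g volume)
    {b : ℝ} (hb : 0 < b) (C D : ℝ) (N : ℕ)
    (h : ∀ u, ‖g u‖ ≤ D * ((C + |u|) ^ N * Real.exp (-b * u ^ 2))) : Integrable g :=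
  (((gauss_poly_integrable hb C N).const_mul D)).mono' hg (Filter.Eventually.of_forall h)

lemma tendsto_zero_of_gauss_bound {g : ℝ → ℂ} {b : ℝ} (hb : 0 < b) (C D : ℝ) (N : ℕ)
    (h : ∀ u, ‖g u‖ ≤ D * ((C + |u|) ^ N * Real.exp (-b * u ^ 2))) :
    Tendsto g atTop (nhds 0) ∧ Tendsto g atBot (nhds 0) :=
  ⟨squeeze_zero_norm h (by simpa using (gauss_poly_tendsto_atTop hb C N).const_mul D),
   squeeze_zero_norm h (by simpa using (gauss_poly_tendsto_atBot hb C N).const_mul D)⟩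

noncomputable def mhf {m : ℕ} (a : Fin m → ℝ) (j : Fin m) (x u : ℝ) : ℂ :=
  (x : ℂ) - (a j : ℂ) + Complex.I * (u : ℂ)

noncomputable def mhΦ {m : ℕ} (a : Fin m → ℝ) (ν : Fin m → ℕ) (x u : ℝ) : ℂ :=
  ∏ j, mhf a j x u ^ ν j

noncomputable def mhG {m : ℕ} (a : Fin m → ℝ) (ν : Fin m → ℕ) (x u : ℝ) : ℂ :=
  Complex.exp (-(u : ℂ) ^ 2 / 2) * mhΦ a ν x u

noncomputable def mhS {m : ℕ} (a : Fin m → ℝ) (ν : Fin m → ℕ) (x u : ℝ) : ℂ :=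
  ∑ j, (∏ l ∈ Finset.univ.erase j, mhf a l x u ^ ν l) *
    ((ν j : ℂ) * mhf a j x u ^ (ν j - 1))

variable {m : ℕ} (a : Fin m → ℝ) (ν : Fin m → ℕ)

lemma norm_mhf_le (j : Fin m) (x u : ℝ) :
    ‖mhf a j x u‖ ≤ 1 + (|x| + ∑ i, |a i|) + |u| := by
  have h1 : ‖mhf a j x u‖ ≤ ‖(x : ℂ) - (a j : ℂ)‖ + ‖Complex.I * (u : ℂ)‖ := norm_add_le _ _
  have h2 : ‖(x : ℂ) - (a j : ℂ)‖ = |x - a j| := by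
    rw [← Complex.ofReal_sub]; exact Complex.norm_real _
  have h3 : ‖Complex.I * (u : ℂ)‖ = |u| := by
    simp
  have h4 : |x - a j| ≤ |x| + |a j| := abs_sub _ _
  have h5 : |a j| ≤ ∑ i, |a i| :=
    Finset.single_le_sum (fun i _ => abs_nonneg (a i)) (Finset.mem_univ j)
  rw [h2, h3] at h1; linarith

lemma one_le_base (x u : ℝ) : (1 : ℝ) ≤ 1 + (|x| + ∑ i, |a i|) + |u| := by
  have := abs_nonneg x; have := abs_nonneg u
  have : 0 ≤ ∑ i, |a i| := Finset.sum_nonneg fun i _ => abs_nonneg _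
  linarith [abs_nonneg x, abs_nonneg u]

lemma norm_mhΦ_le (x u : ℝ) :
    ‖mhΦ a ν x u‖ ≤ (1 + (|x| + ∑ i, |a i|) + |u|) ^ (∑ i, ν i) := by
  rw [mhΦ, ← Finset.prod_pow_eq_pow_sum]
  rw [norm_prod]
  refine Finset.prod_le_prod (fun i _ => norm_nonneg _) (fun i _ => ?_)
  rw [norm_pow]
  exact pow_le_pow_left₀ (norm_nonneg _) (norm_mhf_le a i x u) _

lemma norm_mhS_le (x u : ℝ) :
    ‖mhS a ν x u‖ ≤ (∑ i, ν i) * (1 + (|x| + ∑ i, |a i|) + |u|) ^ (∑ i, ν i) := by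
  set b := 1 + (|x| + ∑ i, |a i|) + |u| with hb
  have hb1 : (1 : ℝ) ≤ b := one_le_base a x u
  have hb0 : (0 : ℝ) ≤ b := zero_le_one.trans hb1
  set N := ∑ i, ν i with hN
  calc ‖mhS a ν x u‖ ≤ ∑ j, ‖(∏ l ∈ Finset.univ.erase j, mhf a l x u ^ ν l) *
        ((ν j : ℂ) * mhf a j x u ^ (ν j - 1))‖ := norm_sum_le _ _
    _ ≤ ∑ j, (ν j : ℝ) * b ^ N := by
        refine Finset.sum_le_sum fun j _ => ?_
        rcases Nat.eq_zero_or_pos (ν j) with h0 | h0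
        · simp only [h0, Nat.cast_zero, zero_mul, mul_zero, norm_zero]
          positivity
        · rw [norm_mul, norm_mul, norm_pow]
          have hprod : ‖∏ l ∈ Finset.univ.erase j, mhf a l x u ^ ν l‖
              ≤ b ^ (∑ l ∈ Finset.univ.erase j, ν l) := by
            rw [← Finset.prod_pow_eq_pow_sum, norm_prod]
            refine Finset.prod_le_prod (fun i _ => norm_nonneg _) (fun i _ => ?_)
            rw [norm_pow]
            exact pow_le_pow_left₀ (norm_nonneg _) (norm_mhf_le a i x u) _
          have hfj : ‖mhf a j x u‖ ^ (ν j - 1) ≤ b ^ (ν j - 1) :=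
            pow_le_pow_left₀ (norm_nonneg _) (norm_mhf_le a j x u) _
          have hsum : (∑ l ∈ Finset.univ.erase j, ν l) + (ν j - 1) ≤ N := by
            have := Finset.sum_erase_add Finset.univ ν (Finset.mem_univ j)
            omega
          have hnormν : ‖((ν j : ℕ) : ℂ)‖ = (ν j : ℝ) := by
            simp
          calc ‖∏ l ∈ Finset.univ.erase j, mhf a l x u ^ ν l‖ *
                (‖((ν j : ℕ) : ℂ)‖ * ‖mhf a j x u‖ ^ (ν j - 1))
              ≤ b ^ (∑ l ∈ Finset.univ.erase j, ν l) * ((ν j : ℝ) * b ^ (ν j - 1)) := by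
                rw [hnormν]
                refine mul_le_mul hprod (mul_le_mul_of_nonneg_left hfj (by positivity)) ?_ ?_
                · positivity
                · positivity
            _ = (ν j : ℝ) * b ^ ((∑ l ∈ Finset.univ.erase j, ν l) + (ν j - 1)) := by
                rw [pow_add]; ring
            _ ≤ (ν j : ℝ) * b ^ N := by
                exact mul_le_mul_of_nonneg_left (pow_le_pow_right₀ hb1 hsum) (by positivity)
    _ = (N : ℝ) * b ^ N := by
        rw [← Finset.sum_mul]; norm_num [hN]

lemma hasDerivAt_pow_comp {g : ℝ → ℂ} {g' : ℂ} {x : ℝ} (h : HasDerivAt g g' x) (n : ℕ) :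
    HasDerivAt (fun y => g y ^ n) ((n : ℂ) * g x ^ (n - 1) * g') x := by
  have h2 := (hasDerivAt_pow n (g x)).comp x h
  simpa [Function.comp_def, mul_assoc] using h2

lemma hasDerivAt_mhf_x (j : Fin m) (u : ℝ) (x : ℝ) :
    HasDerivAt (fun x : ℝ => mhf a j x u) 1 x := by
  have h : HasDerivAt (fun x : ℝ => (x : ℂ)) 1 x := by
    exact Complex.ofRealCLM.hasDerivAt (x := x)
  simpa [mhf] using (h.sub_const (a j : ℂ)).add_const (Complex.I * u)

lemma hasDerivAt_mhf_u (j : Fin m) (x : ℝ) (u : ℝ) :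
    HasDerivAt (fun u : ℝ => mhf a j x u) Complex.I u := by
  have h : HasDerivAt (fun u : ℝ => (u : ℂ)) 1 u := by
    exact Complex.ofRealCLM.hasDerivAt (x := u)
  have h2 := (h.const_mul Complex.I).const_add ((x : ℂ) - (a j : ℂ))
  simpa [mhf] using h2

lemma hasDerivAt_mhΦ_x (u : ℝ) (x : ℝ) :
    HasDerivAt (fun x => mhΦ a ν x u) (mhS a ν x u) x := by
  have h := HasDerivAt.fun_finsetProd (u := Finset.univ)
    (f := fun j (x : ℝ) => mhf a j x u ^ ν j)
    (f' := fun j => (ν j : ℂ) * mhf a j x u ^ (ν j - 1))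
    (fun j _ => by simpa using hasDerivAt_pow_comp (hasDerivAt_mhf_x a j u x) (ν j))
  convert h using 1
  all_goals rfl

lemma hasDerivAt_mhΦ_u (x : ℝ) (u : ℝ) :
    HasDerivAt (fun u => mhΦ a ν x u) (Complex.I * mhS a ν x u) u := by
  have h := HasDerivAt.fun_finsetProd (u := Finset.univ)
    (f := fun j (u : ℝ) => mhf a j x u ^ ν j)
    (f' := fun j => (ν j : ℂ) * mhf a j x u ^ (ν j - 1) * Complex.I)
    (fun j _ => hasDerivAt_pow_comp (hasDerivAt_mhf_u a j x u) (ν j))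
  convert h using 1
  · rfl
  · rfl
  rw [mhS, Finset.mul_sum]
  refine Finset.sum_congr rfl fun j _ => ?_
  rw [smul_eq_mul]; ring

lemma hasDerivAt_cexp_gauss (u : ℝ) :
    HasDerivAt (fun u : ℝ => Complex.exp (-(u : ℂ) ^ 2 / 2))
      (-(u : ℂ) * Complex.exp (-(u : ℂ) ^ 2 / 2)) u := by
  have h : HasDerivAt (fun u : ℝ => (u : ℂ)) 1 u := by
    exact Complex.ofRealCLM.hasDerivAt (x := u)
  have h2 : HasDerivAt (fun u : ℝ => -(u : ℂ) ^ 2 / 2) (-(u : ℂ)) u := by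
    have h3 := ((hasDerivAt_pow_comp h 2).neg).div_const 2
    convert h3 using 1
    · rfl
    · rfl
    push_cast; ring
  simpa [mul_comm] using h2.cexp

lemma hasDerivAt_mhG_u (x : ℝ) (u : ℝ) :
    HasDerivAt (fun u => mhG a ν x u)
      (-(u : ℂ) * mhG a ν x u +
        Complex.exp (-(u : ℂ) ^ 2 / 2) * (Complex.I * mhS a ν x u)) u := by
  have h := (hasDerivAt_cexp_gauss u).mul (hasDerivAt_mhΦ_u a ν x u)
  convert h using 1
  · rfl
  · rfl
  rw [mhG]; ring

lemma continuous_mhG_u (x : ℝ) : Continuous (fun u => mhG a ν x u) := by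
  unfold mhG mhΦ mhf
  fun_prop

lemma continuous_mhS_u (x : ℝ) : Continuous (fun u => mhS a ν x u) := by
  unfold mhS mhf
  fun_prop

lemma norm_cexp_gauss (u : ℝ) : ‖Complex.exp (-(u : ℂ) ^ 2 / 2)‖ = Real.exp (-(1/2) * u ^ 2) := by
  have h : -(u : ℂ) ^ 2 / 2 = ((-(1/2) * u ^ 2 : ℝ) : ℂ) := by push_cast; ring
  rw [h, ← Complex.ofReal_exp, Complex.norm_real, Real.norm_eq_abs, abs_of_pos (Real.exp_pos _)]

section

variable {m : ℕ} (a : Fin m → ℝ) (ν : Fin m → ℕ)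

lemma norm_mhG_le (x u : ℝ) :
    ‖mhG a ν x u‖ ≤ 1 * (((1 + (|x| + ∑ i, |a i|)) + |u|) ^ (∑ i, ν i) *
      Real.exp (-(1/2) * u ^ 2)) := by
  rw [mhG, norm_mul, norm_cexp_gauss, one_mul, mul_comm (Real.exp _)]
  exact mul_le_mul_of_nonneg_right (norm_mhΦ_le a ν x u) (Real.exp_nonneg _)

lemma integrable_mhG (x : ℝ) : Integrable (fun u : ℝ => mhG a ν x u) :=
  integrable_of_gauss_bound (continuous_mhG_u a ν x).aestronglyMeasurable
    (by norm_num : (0:ℝ) < 1/2) _ _ _ (norm_mhG_le a ν x)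

lemma norm_mul_mhG_le (x u : ℝ) :
    ‖(u : ℂ) * mhG a ν x u‖ ≤ 1 * (((1 + (|x| + ∑ i, |a i|)) + |u|) ^ ((∑ i, ν i) + 1) *
      Real.exp (-(1/2) * u ^ 2)) := by
  have h0 : (0:ℝ) ≤ 1 + (|x| + ∑ i, |a i|) := by positivity
  have h1 : |u| ≤ (1 + (|x| + ∑ i, |a i|)) + |u| := by linarith [abs_nonneg u]
  rw [norm_mul, Complex.norm_real, Real.norm_eq_abs, one_mul, pow_succ]
  have h2 := norm_mhG_le a ν x u
  rw [one_mul] at h2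
  calc |u| * ‖mhG a ν x u‖
      ≤ ((1 + (|x| + ∑ i, |a i|)) + |u|) *
        (((1 + (|x| + ∑ i, |a i|)) + |u|) ^ (∑ i, ν i) * Real.exp (-(1/2) * u ^ 2)) :=
        mul_le_mul h1 h2 (norm_nonneg _) (by positivity)
    _ = ((1 + (|x| + ∑ i, |a i|)) + |u|) ^ (∑ i, ν i) * ((1 + (|x| + ∑ i, |a i|)) + |u|) *
        Real.exp (-(1/2) * u ^ 2) := by ring

lemma integrable_mul_mhG (x : ℝ) : Integrable (fun u : ℝ => (u : ℂ) * mhG a ν x u) :=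
  integrable_of_gauss_bound ((Complex.continuous_ofReal.mul (continuous_mhG_u a ν x))).aestronglyMeasurable
    (by norm_num : (0:ℝ) < 1/2) _ _ _ (norm_mul_mhG_le a ν x)

lemma norm_exp_mhS_le (x u : ℝ) :
    ‖Complex.exp (-(u : ℂ) ^ 2 / 2) * mhS a ν x u‖ ≤
      (∑ i, ν i) * (((1 + (|x| + ∑ i, |a i|)) + |u|) ^ (∑ i, ν i) *
        Real.exp (-(1/2) * u ^ 2)) := by
  rw [norm_mul, norm_cexp_gauss]
  calc Real.exp (-(1/2) * u ^ 2) * ‖mhS a ν x u‖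
      ≤ Real.exp (-(1/2) * u ^ 2) *
        ((∑ i, ν i) * ((1 + (|x| + ∑ i, |a i|)) + |u|) ^ (∑ i, ν i)) :=
        mul_le_mul_of_nonneg_left (norm_mhS_le a ν x u) (Real.exp_nonneg _)
    _ = _ := by ring

lemma integrable_exp_mhS (x : ℝ) :
    Integrable (fun u : ℝ => Complex.exp (-(u : ℂ) ^ 2 / 2) * mhS a ν x u) := by
  refine integrable_of_gauss_bound ?_ (by norm_num : (0:ℝ) < 1/2) _ _ _
    (norm_exp_mhS_le a ν x)
  exact (Continuous.mul (by fun_prop) (continuous_mhS_u a ν x)).aestronglyMeasurable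

lemma integral_parts (x : ℝ) :
    ∫ u : ℝ, Complex.exp (-(u : ℂ) ^ 2 / 2) * (Complex.I * mhS a ν x u) =
      ∫ u : ℝ, (u : ℂ) * mhG a ν x u := by
  have hint2 : Integrable (fun u : ℝ => Complex.exp (-(u : ℂ) ^ 2 / 2) * (Complex.I * mhS a ν x u)) := by
    have h := (integrable_exp_mhS a ν x).const_mul Complex.I
    refine h.congr (Filter.Eventually.of_forall fun u => by ring)
  have hint1 : Integrable (fun u : ℝ => -(u : ℂ) * mhG a ν x u) := by
    have h := (integrable_mul_mhG a ν x).neg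
    refine h.congr (Filter.Eventually.of_forall fun u => by simp)
  have hd : ∀ u : ℝ, HasDerivAt (fun u : ℝ => mhG a ν x u)
      ((fun u : ℝ => -(u : ℂ) * mhG a ν x u +
        Complex.exp (-(u : ℂ) ^ 2 / 2) * (Complex.I * mhS a ν x u)) u) u :=
    fun u => hasDerivAt_mhG_u a ν x u
  have htt := tendsto_zero_of_gauss_bound (by norm_num : (0:ℝ) < 1/2) _ _ _ (norm_mhG_le a ν x)
  have hzero := integral_of_hasDerivAt_of_tendsto hd (hint1.add hint2) htt.2 htt.1
  rw [sub_zero] at hzero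
  rw [integral_add hint1 hint2] at hzero
  have hneg : ∫ u : ℝ, -(u : ℂ) * mhG a ν x u = -∫ u : ℝ, (u : ℂ) * mhG a ν x u := by
    rw [← integral_neg]
    exact integral_congr_ae (Filter.Eventually.of_forall fun u => by ring)
  rw [hneg] at hzero
  linear_combination hzero

lemma mhP_eq (x : ℝ) :
    mhP a ν x = (Real.sqrt (2 * Real.pi) : ℂ)⁻¹ * ∫ u : ℝ, mhG a ν x u := rfl

lemma hasDerivAt_mhP (x : ℝ) :
    HasDerivAt (mhP a ν)
      ((Real.sqrt (2 * Real.pi) : ℂ)⁻¹ * ∫ u : ℝ, Complex.exp (-(u : ℂ) ^ 2 / 2) * mhS a ν x u)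
      x := by
  set A := ∑ i, |a i| with hA
  set N := ∑ i, ν i with hN
  have hA0 : 0 ≤ A := Finset.sum_nonneg fun i _ => abs_nonneg _
  have key := hasDerivAt_integral_of_dominated_loc_of_deriv_le (μ := volume)
    (F := fun x u => mhG a ν x u)
    (F' := fun x u => Complex.exp (-(u : ℂ) ^ 2 / 2) * mhS a ν x u)
    (x₀ := x) (s := Metric.ball x 1) (Metric.ball_mem_nhds x one_pos)
    (bound := fun u => (N : ℝ) * (((2 + (|x| + A)) + |u|) ^ N * Real.exp (-(1/2) * u ^ 2)))
    (Filter.Eventually.of_forall fun y => (continuous_mhG_u a ν y).aestronglyMeasurable)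
    (integrable_mhG a ν x)
    ((Continuous.mul (by fun_prop) (continuous_mhS_u a ν x)).aestronglyMeasurable)
    ?_ ?_ ?_
  · exact key.2.const_mul _
  · refine Filter.Eventually.of_forall fun u => fun y hy => ?_
    have h1 := norm_exp_mhS_le a ν y u
    refine h1.trans ?_
    have hxy : |y| ≤ 1 + |x| := by
      have h2 := mem_ball_iff_norm.mp hy
      rw [Real.norm_eq_abs] at h2
      have h3 : |y| - |x| ≤ |y - x| := abs_sub_abs_le_abs_sub y x
      linarith
    have hbase : (1 + (|y| + A)) + |u| ≤ (2 + (|x| + A)) + |u| := by linarith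
    have hp : ((1 + (|y| + A)) + |u|) ^ N ≤ ((2 + (|x| + A)) + |u|) ^ N :=
      pow_le_pow_left₀ (by positivity) hbase N
    have := mul_le_mul_of_nonneg_right hp (Real.exp_nonneg (-(1/2) * u ^ 2))
    exact mul_le_mul_of_nonneg_left this (by positivity)
  · exact ((gauss_poly_integrable (by norm_num : (0:ℝ) < 1/2) (2 + (|x| + A)) N).const_mul _)
  · refine Filter.Eventually.of_forall fun u => fun y _ => ?_
    exact (hasDerivAt_mhΦ_x a ν u y).const_mul _

end


section
variable {m : ℕ} (a : Fin m → ℝ) (n : Fin m → ℕ)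

lemma mhΦ_succ (k : Fin m) (hk : 1 ≤ n k) (x u : ℝ) :
    mhΦ a n x u = mhf a k x u * mhΦ a (Function.update n k (n k - 1)) x u := by
  rw [mhΦ, mhΦ, ← Finset.mul_prod_erase Finset.univ _ (Finset.mem_univ k),
    ← Finset.mul_prod_erase Finset.univ _ (Finset.mem_univ k)]
  have hprod : ∏ l ∈ Finset.univ.erase k, mhf a l x u ^ (Function.update n k (n k - 1)) l
      = ∏ l ∈ Finset.univ.erase k, mhf a l x u ^ n l := by
    refine Finset.prod_congr rfl fun l hl => ?_
    rw [Function.update_of_ne (Finset.ne_of_mem_erase hl)]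
  rw [hprod, Function.update_self]
  obtain ⟨q, hq⟩ : ∃ q, n k = q + 1 := ⟨n k - 1, by omega⟩
  rw [hq, Nat.add_sub_cancel, pow_succ]
  ring

lemma mhG_succ (k : Fin m) (hk : 1 ≤ n k) (x u : ℝ) :
    mhG a n x u = mhf a k x u * mhG a (Function.update n k (n k - 1)) x u := by
  rw [mhG, mhG, mhΦ_succ a n k hk x u]; ring

lemma hasDerivAt_mhP_lower (k : Fin m) (hk : 1 ≤ n k) (x : ℝ) :
    HasDerivAt (mhP a (Function.update n k (n k - 1)))
      (((x : ℂ) - (a k : ℂ)) * mhP a (Function.update n k (n k - 1)) x - mhP a n x) x := by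
  set ν' := Function.update n k (n k - 1) with hν'
  have h := hasDerivAt_mhP a ν' x
  have e0 : ∫ u : ℝ, Complex.exp (-(u : ℂ) ^ 2 / 2) * (Complex.I * mhS a ν' x u)
      = Complex.I * ∫ u : ℝ, Complex.exp (-(u : ℂ) ^ 2 / 2) * mhS a ν' x u := by
    rw [← integral_const_mul]
    exact integral_congr_ae (Filter.Eventually.of_forall fun u => by ring)
  have e1 : ∫ u : ℝ, (u : ℂ) * mhG a ν' x u
      = -Complex.I * ((∫ u : ℝ, mhG a n x u) - ((x : ℂ) - (a k : ℂ)) * ∫ u : ℝ, mhG a ν' x u) := by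
    have hpt : ∀ u : ℝ, (u : ℂ) * mhG a ν' x u
        = -Complex.I * (mhG a n x u - ((x : ℂ) - (a k : ℂ)) * mhG a ν' x u) := by
      intro u
      rw [mhG_succ a n k hk x u, mhf]
      have hI : Complex.I * Complex.I = -1 := Complex.I_mul_I
      linear_combination ((u : ℂ) * mhG a ν' x u) * hI
    rw [integral_congr_ae (Filter.Eventually.of_forall hpt)]
    rw [integral_const_mul, integral_sub (integrable_mhG a n x)
      ((integrable_mhG a ν' x).const_mul _), integral_const_mul]
  have e2 : ∫ u : ℝ, Complex.exp (-(u : ℂ) ^ 2 / 2) * mhS a ν' x u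
      = ((x : ℂ) - (a k : ℂ)) * (∫ u : ℝ, mhG a ν' x u) - ∫ u : ℝ, mhG a n x u := by
    have hp := integral_parts a ν' x
    rw [e0, e1] at hp
    have hI : Complex.I * Complex.I = -1 := Complex.I_mul_I
    linear_combination -Complex.I * hp + ((∫ u : ℝ, Complex.exp (-(u : ℂ) ^ 2 / 2) * mhS a ν' x u) + (∫ u : ℝ, mhG a n x u) - ((x : ℂ) - (a k : ℂ)) * ∫ u : ℝ, mhG a ν' x u) * hI
  rw [e2] at h
  convert h using 1
  rw [mhP_eq, mhP_eq]
  ring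

end

section
variable {m : ℕ} (a : Fin m → ℝ) (ν : Fin m → ℕ)

lemma norm_mhP_le (x : ℝ) :
    ‖mhP a ν x‖ ≤ ‖((Real.sqrt (2 * Real.pi) : ℂ))⁻¹‖ *
      (∫ u : ℝ, (1 + |u|) ^ (∑ i, ν i) * Real.exp (-(1/2) * u ^ 2)) *
      ((1 + ∑ i, |a i|) + |x|) ^ (∑ i, ν i) := by
  set A := ∑ i, |a i| with hA
  set N := ∑ i, ν i with hN
  have hA0 : 0 ≤ A := Finset.sum_nonneg fun i _ => abs_nonneg _
  rw [mhP_eq, norm_mul, mul_assoc]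
  refine mul_le_mul_of_nonneg_left ?_ (norm_nonneg _)
  have hbase : ∀ u : ℝ, (1 + (|x| + A)) + |u| ≤ ((1 + A) + |x|) * (1 + |u|) := by
    intro u
    have h1 : 0 ≤ (A + |x|) * |u| := by positivity
    nlinarith [abs_nonneg x, abs_nonneg u]
  have hpt : ∀ u : ℝ, ‖mhG a ν x u‖ ≤
      (1 + |u|) ^ N * Real.exp (-(1/2) * u ^ 2) * ((1 + A) + |x|) ^ N := by
    intro u
    have h1 := norm_mhG_le a ν x u
    rw [one_mul] at h1
    refine h1.trans ?_
    have h2 : ((1 + (|x| + A)) + |u|) ^ N ≤ (((1 + A) + |x|) * (1 + |u|)) ^ N :=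
      pow_le_pow_left₀ (by positivity) (hbase u) N
    rw [mul_pow] at h2
    calc ((1 + (|x| + A)) + |u|) ^ N * Real.exp (-(1/2) * u ^ 2)
        ≤ ((1 + A) + |x|) ^ N * (1 + |u|) ^ N * Real.exp (-(1/2) * u ^ 2) :=
          mul_le_mul_of_nonneg_right h2 (Real.exp_nonneg _)
      _ = (1 + |u|) ^ N * Real.exp (-(1/2) * u ^ 2) * ((1 + A) + |x|) ^ N := by ring
  have hint : Integrable (fun u : ℝ =>
      (1 + |u|) ^ N * Real.exp (-(1/2) * u ^ 2) * ((1 + A) + |x|) ^ N) :=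
    (gauss_poly_integrable (by norm_num : (0:ℝ) < 1/2) 1 N).mul_const _
  have h3 := norm_integral_le_of_norm_le hint (Filter.Eventually.of_forall hpt)
  rw [integral_mul_const] at h3
  exact h3

lemma norm_cexp_weight (c x : ℝ) :
    ‖Complex.exp (-(x : ℂ) ^ 2 / 2 + (c : ℂ) * (x : ℂ))‖ = Real.exp (-(1/2) * x ^ 2 + c * x) := by
  have h : -(x : ℂ) ^ 2 / 2 + (c : ℂ) * (x : ℂ) = ((-(1/2) * x ^ 2 + c * x : ℝ) : ℂ) := by
    push_cast; ring
  rw [h, ← Complex.ofReal_exp, Complex.norm_real, Real.norm_eq_abs,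
    abs_of_pos (Real.exp_pos _)]

lemma integrand_bound (k : Fin m) (p : ℕ) (x : ℝ) :
    ‖mhP a ν x * (x : ℂ) ^ p * Complex.exp (-(x : ℂ) ^ 2 / 2 + (a k : ℂ) * (x : ℂ))‖ ≤
      (‖((Real.sqrt (2 * Real.pi) : ℂ))⁻¹‖ *
        (∫ u : ℝ, (1 + |u|) ^ (∑ i, ν i) * Real.exp (-(1/2) * u ^ 2)) * Real.exp ((a k) ^ 2)) *
      (((1 + ∑ i, |a i|) + |x|) ^ ((∑ i, ν i) + p) * Real.exp (-(1/4) * x ^ 2)) := by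
  set A := ∑ i, |a i| with hA
  set N := ∑ i, ν i with hN
  set K := ‖((Real.sqrt (2 * Real.pi) : ℂ))⁻¹‖ *
      (∫ u : ℝ, (1 + |u|) ^ N * Real.exp (-(1/2) * u ^ 2)) with hK
  have hA0 : 0 ≤ A := Finset.sum_nonneg fun i _ => abs_nonneg _
  have hK0 : 0 ≤ K := by
    rw [hK]
    have : 0 ≤ ∫ u : ℝ, (1 + |u|) ^ N * Real.exp (-(1/2) * u ^ 2) :=
      integral_nonneg fun u => by positivity
    positivity
  rw [norm_mul, norm_mul, norm_pow, Complex.norm_real, Real.norm_eq_abs, norm_cexp_weight]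
  have h1 : ‖mhP a ν x‖ ≤ K * ((1 + A) + |x|) ^ N := norm_mhP_le a ν x
  have h2 : |x| ^ p ≤ ((1 + A) + |x|) ^ p :=
    pow_le_pow_left₀ (abs_nonneg _) (by linarith [abs_nonneg x]) p
  have h3 : Real.exp (-(1/2) * x ^ 2 + a k * x) ≤ Real.exp ((a k) ^ 2) * Real.exp (-(1/4) * x ^ 2) := by
    rw [← Real.exp_add]
    refine Real.exp_le_exp.2 ?_
    nlinarith [sq_nonneg (x / 2 - a k)]
  calc ‖mhP a ν x‖ * |x| ^ p * Real.exp (-(1/2) * x ^ 2 + a k * x)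
      ≤ (K * ((1 + A) + |x|) ^ N) * ((1 + A) + |x|) ^ p *
        (Real.exp ((a k) ^ 2) * Real.exp (-(1/4) * x ^ 2)) := by
        refine mul_le_mul (mul_le_mul h1 h2 (by positivity) (by positivity)) h3
          (Real.exp_nonneg _) (by positivity)
    _ = (K * Real.exp ((a k) ^ 2)) * (((1 + A) + |x|) ^ (N + p) * Real.exp (-(1/4) * x ^ 2)) := by
        rw [pow_add]; ring

lemma continuous_mhP : Continuous (mhP a ν) :=
  continuous_iff_continuousAt.mpr fun x => (hasDerivAt_mhP a ν x).continuousAt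

lemma integrand_integrable (k : Fin m) (p : ℕ) :
    Integrable (fun x : ℝ =>
      mhP a ν x * (x : ℂ) ^ p * Complex.exp (-(x : ℂ) ^ 2 / 2 + (a k : ℂ) * (x : ℂ))) := by
  refine integrable_of_gauss_bound ?_ (by norm_num : (0:ℝ) < 1/4) _ _ _ (integrand_bound a ν k p)
  exact (((continuous_mhP a ν).mul (by fun_prop)).mul (by fun_prop)).aestronglyMeasurable

lemma integrand_tendsto (k : Fin m) (p : ℕ) :
    Tendsto (fun x : ℝ =>
        mhP a ν x * (x : ℂ) ^ p * Complex.exp (-(x : ℂ) ^ 2 / 2 + (a k : ℂ) * (x : ℂ)))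
      atTop (nhds 0) ∧
    Tendsto (fun x : ℝ =>
        mhP a ν x * (x : ℂ) ^ p * Complex.exp (-(x : ℂ) ^ 2 / 2 + (a k : ℂ) * (x : ℂ)))
      atBot (nhds 0) :=
  tendsto_zero_of_gauss_bound (by norm_num : (0:ℝ) < 1/4) _ _ _ (integrand_bound a ν k p)

end

theorem stmt_7 (m : ℕ) (hm : 1 ≤ m) (a : Fin m → ℝ) (ha : Function.Injective a)
    (n : Fin m → ℕ) (hn : ∀ k, 1 ≤ n k) :
    ∀ k : Fin m,
      ∫ x : ℝ, mhP a n x * (x : ℂ) ^ (n k) *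
        Complex.exp (-(x : ℂ) ^ 2 / 2 + (a k : ℂ) * (x : ℂ)) =
      (n k : ℂ) *
        ∫ x : ℝ, mhP a (Function.update n k (n k - 1)) x * (x : ℂ) ^ (n k - 1) *
          Complex.exp (-(x : ℂ) ^ 2 / 2 + (a k : ℂ) * (x : ℂ)) := by
  intro k
  set ν' := Function.update n k (n k - 1) with hν'
  have hL := integrand_integrable a n k (n k)
  have hR := integrand_integrable a ν' k (n k - 1)
  have hg : ∀ x : ℝ, HasDerivAt
      (fun x : ℝ => mhP a ν' x * (x : ℂ) ^ (n k) *
        Complex.exp (-(x : ℂ) ^ 2 / 2 + (a k : ℂ) * (x : ℂ)))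
      ((fun x : ℝ => (n k : ℂ) * (mhP a ν' x * (x : ℂ) ^ (n k - 1) *
          Complex.exp (-(x : ℂ) ^ 2 / 2 + (a k : ℂ) * (x : ℂ))) -
        mhP a n x * (x : ℂ) ^ (n k) *
          Complex.exp (-(x : ℂ) ^ 2 / 2 + (a k : ℂ) * (x : ℂ))) x) x := by
    intro x
    have h1 := hasDerivAt_mhP_lower a n k (hn k) x
    have hid : HasDerivAt (fun x : ℝ => ((x : ℝ) : ℂ)) 1 x := by
      exact Complex.ofRealCLM.hasDerivAt (x := x)
    have h2 : HasDerivAt (fun x : ℝ => ((x : ℂ)) ^ (n k))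
        ((n k : ℂ) * (x : ℂ) ^ (n k - 1) * 1) x := hasDerivAt_pow_comp hid (n k)
    have h3exp : HasDerivAt (fun x : ℝ => -(x : ℂ) ^ 2 / 2 + (a k : ℂ) * (x : ℂ))
        (-(x : ℂ) + (a k : ℂ)) x := by
      have hsq := ((hasDerivAt_pow_comp hid 2).neg).div_const 2
      have hlin := hid.const_mul ((a k : ℂ))
      have h4 := hsq.add hlin
      convert h4 using 1
      · rfl
      · rfl
      push_cast
      ring
    have h3 : HasDerivAt (fun x : ℝ => Complex.exp (-(x : ℂ) ^ 2 / 2 + (a k : ℂ) * (x : ℂ)))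
        (Complex.exp (-(x : ℂ) ^ 2 / 2 + (a k : ℂ) * (x : ℂ)) * (-(x : ℂ) + (a k : ℂ))) x :=
      h3exp.cexp
    have h := (h1.mul h2).mul h3
    convert h using 1
    · rfl
    · rfl
    simp only [Pi.mul_apply]
    ring
  have htt := integrand_tendsto a ν' k (n k)
  have hint : Integrable (fun x : ℝ => (n k : ℂ) * (mhP a ν' x * (x : ℂ) ^ (n k - 1) *
      Complex.exp (-(x : ℂ) ^ 2 / 2 + (a k : ℂ) * (x : ℂ))) -
      mhP a n x * (x : ℂ) ^ (n k) *
        Complex.exp (-(x : ℂ) ^ 2 / 2 + (a k : ℂ) * (x : ℂ))) :=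
    (hR.const_mul _).sub hL
  have hzero := integral_of_hasDerivAt_of_tendsto hg hint htt.2 htt.1
  rw [sub_zero] at hzero
  rw [integral_sub (hR.const_mul _) hL, integral_const_mul] at hzero
  linear_combination -hzero
end
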